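/- arXiv:0803.3702 — 11 statements merged into one kernel-verified Lean document; each statement's English description precedes it below -/
import Mathlib

section
/- For every natural number r, the r-th addition structure polynomial of p-typical Witt vectors — i.e. the integral polynomial S_r in the variables T_0,…,T_r,U_0,…,U_r such that for any commutative ring A and any Witt vectors a, b ∈ 𝕎(A) one has (a+b)_r = S_r(a_0,…,a_r,b_0,…,b_r) — is isobaric of weight p^r, where the variable T_i and the variable U_i are each assigned weight p^i (that is, every monomial occurring in S_r has total weight p^r for this weighting). -/
open MvPolynomial Finset

namespace StmtAux

variable {σ τ : Type*}

theorem weight_mapDomain (w : τ → ℕ) (f : σ → τ) (u : σ →₀ ℕ) :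
    Finsupp.weight w (u.mapDomain f) = Finsupp.weight (w ∘ f) u := by
  induction u using Finsupp.induction with
  | zero => simp
  | single_add a b u' _ _ ih =>
    rw [Finsupp.mapDomain_add, map_add, map_add, ih, Finsupp.mapDomain_single]
    simp [Finsupp.weight_apply, Finsupp.sum_single_index]

theorem isWH_pow {R : Type*} [CommRing R] {w : σ → ℕ} {φ : MvPolynomial σ R} {m : ℕ}
    (h : φ.IsWeightedHomogeneous w m) (k : ℕ) :
    (φ ^ k).IsWeightedHomogeneous w (k * m) := by
  induction k with
  | zero => simpa using isWeightedHomogeneous_one R w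
  | succ k ih => rw [pow_succ, Nat.succ_mul]; exact ih.mul h

theorem isWH_rename {R : Type*} [CommRing R] {w : τ → ℕ} {φ : MvPolynomial σ R} {m : ℕ}
    (f : σ → τ) (h : φ.IsWeightedHomogeneous (w ∘ f) m) :
    (rename f φ).IsWeightedHomogeneous w m := by
  intro d hd
  obtain ⟨u, hu, hcoeff⟩ := coeff_rename_ne_zero f φ d hd
  rw [← hu, weight_mapDomain]
  exact h hcoeff

theorem isWH_neg {R : Type*} [CommRing R] {w : σ → ℕ} {φ : MvPolynomial σ R} {m : ℕ}
    (h : φ.IsWeightedHomogeneous w m) : (-φ).IsWeightedHomogeneous w m := by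
  intro d hd
  apply h
  simpa using hd

theorem wittPoly_isWH (p n : ℕ) :
    (wittPolynomial p ℤ n).IsWeightedHomogeneous (fun k => p ^ k) (p ^ n) := by
  rw [wittPolynomial]
  apply IsWeightedHomogeneous.sum
  intro i hi
  apply isWeightedHomogeneous_monomial
  rw [Finsupp.weight_apply, Finsupp.sum_single_index]
  · simp only [smul_eq_mul]
    rw [← pow_add, Nat.sub_add_cancel (Nat.lt_succ_iff.mp (mem_range.mp hi))]
  · simp

theorem wittAdd_isWH (p : ℕ) [Fact p.Prime] (n : ℕ) :
    (WittVector.wittAdd p n).IsWeightedHomogeneous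
      (fun v : Fin 2 × ℕ => p ^ v.2) (p ^ n) := by
  induction n using Nat.strong_induction_on with
  | _ n ih =>
  set w : Fin 2 × ℕ → ℕ := fun v => p ^ v.2 with hw
  have key := wittStructureInt_prop p (X (0 : Fin 2) + X 1) n
  have hdef : wittStructureInt p (X (0 : Fin 2) + X 1) = WittVector.wittAdd p := rfl
  rw [hdef] at key
  have lhs : bind₁ (WittVector.wittAdd p) (wittPolynomial p ℤ n) =
      ∑ i ∈ range (n + 1),
        (p : MvPolynomial (Fin 2 × ℕ) ℤ) ^ i * WittVector.wittAdd p i ^ p ^ (n - i) :=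
    aeval_wittPolynomial p ℤ (WittVector.wittAdd p) n
  rw [lhs, map_add, bind₁_X_right, bind₁_X_right, sum_range_succ, Nat.sub_self, pow_zero,
    pow_one] at key
  have hpn : (p : MvPolynomial (Fin 2 × ℕ) ℤ) ^ n * WittVector.wittAdd p n =
      (rename (Prod.mk 0) (wittPolynomial p ℤ n) + rename (Prod.mk 1) (wittPolynomial p ℤ n)) +
      -(∑ i ∈ range n,
          (p : MvPolynomial (Fin 2 × ℕ) ℤ) ^ i * WittVector.wittAdd p i ^ p ^ (n - i)) := by
    rw [← key]; ring
  have hC : ∀ k : ℕ, (p : MvPolynomial (Fin 2 × ℕ) ℤ) ^ k = C ((p : ℤ) ^ k) := by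
    intro k; rw [map_pow, map_natCast]
  have hhom : ((p : MvPolynomial (Fin 2 × ℕ) ℤ) ^ n *
      WittVector.wittAdd p n).IsWeightedHomogeneous w (p ^ n) := by
    rw [hpn]
    apply IsWeightedHomogeneous.add
    · apply IsWeightedHomogeneous.add <;>
      · apply isWH_rename
        exact wittPoly_isWH p n
    · apply isWH_neg
      apply IsWeightedHomogeneous.sum
      intro i hi
      have hi' : i < n := mem_range.mp hi
      have h1 : (WittVector.wittAdd p i ^ p ^ (n - i)).IsWeightedHomogeneous w
          (p ^ (n - i) * p ^ i) := isWH_pow (ih i hi') _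
      rw [← pow_add, Nat.sub_add_cancel hi'.le] at h1
      rw [hC]
      simpa using (isWeightedHomogeneous_C w ((p : ℤ) ^ i)).mul h1
  intro d hd
  apply hhom
  rw [hC, coeff_C_mul]
  exact mul_ne_zero (pow_ne_zero _ (by exact_mod_cast (Fact.out : p.Prime).ne_zero)) hd

end StmtAux

/-- For every natural number `r`, the `r`-th addition structure polynomial of
`p`-typical Witt vectors (the integral polynomial `S_r = wittAdd p r` in the variables
`T_0, …, T_r, U_0, …, U_r` such that for any commutative ring `A` and Witt vectors `a, b`
one has `(a + b)_r = S_r(a_0, …, a_r, b_0, …, b_r)`) is isobaric of weight `p ^ r`,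
where the variable indexed by `(i, k)` has weight `p ^ k`. -/
theorem stmt_0 (p : ℕ) [Fact p.Prime] (r : ℕ) :
    (∀ (A : Type) [CommRing A] (a b : WittVector p A),
        (a + b).coeff r = WittVector.peval (WittVector.wittAdd p r) ![a.coeff, b.coeff]) ∧
      (WittVector.wittAdd p r).IsWeightedHomogeneous
        (fun v : Fin 2 × ℕ => p ^ v.2) (p ^ r) := by
  exact ⟨fun A _ a b => WittVector.add_coeff a b r, StmtAux.wittAdd_isWH p r⟩
end

section
/- Let λ ∈ R and set A := R/λR. If a, b ∈ A satisfy a^p = 0 and b^p = 0, then the Teichmüller lifts add: [a] + [b] = [a + b] in the ring 𝕎(A) of p-typical Witt vectors. In particular the Teichmüller map is an additive group homomorphism from {a ∈ A : a^p = 0} to 𝕎(A). -/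
open MvPolynomial Finset

namespace Stmt2Aux

variable (p : ℕ) [hp : Fact p.Prime]

/-- The substitution sending `(i, 0) ↦ X i` and `(i, k) ↦ 0` for `k > 0`. -/
noncomputable def gsub : Fin 2 × ℕ → MvPolynomial (Fin 2) ℤ :=
  fun v => if v.2 = 0 then X v.1 else 0

/-- The universal polynomial giving the `n`-th coefficient of `[a] + [b]`. -/
noncomputable def S (n : ℕ) : MvPolynomial (Fin 2) ℤ :=
  bind₁ (gsub) (WittVector.wittAdd p n)

theorem S_spec {A : Type*} [CommRing A] (a b : A) (n : ℕ) :
    (WittVector.teichmuller p a + WittVector.teichmuller p b).coeff n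
      = aeval ![a, b] (S p n) := by
  rw [WittVector.add_coeff, S, aeval_bind₁]
  unfold WittVector.peval
  have hfun : Function.uncurry
      ![(WittVector.teichmuller p a).coeff, (WittVector.teichmuller p b).coeff]
      = fun v => aeval ![a, b] (gsub v) := by
    funext v
    rcases v with ⟨i, k⟩
    simp only [Function.uncurry, gsub]
    rcases Nat.eq_zero_or_pos k with hk | hk
    · subst hk
      fin_cases i <;> simp [WittVector.teichmuller_coeff_zero]
    · rw [if_neg hk.ne']
      fin_cases i <;>
        simp [WittVector.teichmuller_coeff_pos _ _ _ hk]
  rw [hfun]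

theorem S_zero : S p 0 = X 0 + X 1 := by
  rw [S, WittVector.wittAdd_zero]
  simp [gsub]

/-- The ghost identity for the polynomials `S p n`. -/
theorem S_ghost (n : ℕ) :
    ∑ i ∈ range (n + 1), (p : MvPolynomial (Fin 2) ℤ) ^ i * (S p i) ^ p ^ (n - i)
      = X 0 ^ p ^ n + X 1 ^ p ^ n := by
  have h := wittStructureInt_prop p (X (0 : Fin 2) + X 1) n
  have h2 := congrArg (bind₁ (gsub)) h
  rw [bind₁_bind₁, bind₁_bind₁] at h2
  calc ∑ i ∈ range (n + 1), (p : MvPolynomial (Fin 2) ℤ) ^ i * (S p i) ^ p ^ (n - i)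
      = bind₁ (fun i => bind₁ gsub (wittStructureInt p (X (0:Fin 2) + X 1) i))
          (wittPolynomial p ℤ n) := by
        rw [show (bind₁ (fun i => bind₁ gsub (wittStructureInt p (X (0:Fin 2) + X 1) i))
            : MvPolynomial ℕ ℤ →ₐ[ℤ] _) = aeval _ from rfl, aeval_wittPolynomial]
        rfl
    _ = bind₁ (fun i => bind₁ gsub (rename (Prod.mk i) (wittPolynomial p ℤ n)))
          (X (0:Fin 2) + X 1) := h2
    _ = X 0 ^ p ^ n + X 1 ^ p ^ n := by
        rw [map_add, bind₁_X_right, bind₁_X_right, bind₁_rename, bind₁_rename]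
        have key : ∀ i : Fin 2,
            (bind₁ (gsub ∘ Prod.mk i)) (wittPolynomial p ℤ n) = X i ^ p ^ n := by
          intro i
          rw [show (bind₁ (gsub ∘ Prod.mk i) : MvPolynomial ℕ ℤ →ₐ[ℤ] _) = aeval _ from rfl,
            aeval_wittPolynomial]
          rw [Finset.sum_eq_single 0]
          · simp [gsub]
          · intro j hj hj0
            have : (gsub ∘ Prod.mk i) j = 0 := by simp [gsub, hj0]
            rw [this, zero_pow (pow_ne_zero _ hp.out.ne_zero), mul_zero]
          · intro h0; exact absurd (Finset.mem_range.2 (Nat.succ_pos n)) h0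
        rw [key 0, key 1]

theorem isHomogeneous_of_C_mul {c : ℤ} (hc : c ≠ 0) {φ : MvPolynomial (Fin 2) ℤ} {m : ℕ}
    (h : (C c * φ).IsHomogeneous m) : φ.IsHomogeneous m := by
  intro d hd
  exact h (by rw [coeff_C_mul]; exact mul_ne_zero hc hd)

theorem S_isHomogeneous : ∀ n, (S p n).IsHomogeneous (p ^ n) := by
  intro n
  induction n using Nat.strong_induction_on with
  | _ n ih =>
    have hghost := S_ghost p n
    rw [Finset.sum_range_succ, Nat.sub_self, pow_zero, pow_one] at hghost
    have hSn : (p : MvPolynomial (Fin 2) ℤ) ^ n * S p n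
        = (X 0 ^ p ^ n + X 1 ^ p ^ n)
          - ∑ i ∈ range n, (p : MvPolynomial (Fin 2) ℤ) ^ i * (S p i) ^ p ^ (n - i) := by
      rw [← hghost]; ring
    have hC : (p : MvPolynomial (Fin 2) ℤ) ^ n = C ((p : ℤ) ^ n) := by
      rw [map_pow, map_natCast (C : ℤ →+* MvPolynomial (Fin 2) ℤ)]
    apply isHomogeneous_of_C_mul (c := (p : ℤ) ^ n)
      (pow_ne_zero _ (Int.natCast_ne_zero.2 hp.out.ne_zero))
    rw [← hC, hSn]
    rw [← mem_homogeneousSubmodule]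
    apply Submodule.sub_mem
    · apply Submodule.add_mem <;>
        exact (mem_homogeneousSubmodule _ _).2 (isHomogeneous_X_pow _ _)
    · apply Submodule.sum_mem
      intro i hi
      rw [Finset.mem_range] at hi
      rw [mem_homogeneousSubmodule]
      have hCpi : (p : MvPolynomial (Fin 2) ℤ) ^ i = C ((p : ℤ) ^ i) := by rw [map_pow, map_natCast (C : ℤ →+* MvPolynomial (Fin 2) ℤ)]
      rw [hCpi]
      have := ((ih i hi).pow (p ^ (n - i))).C_mul ((p : ℤ) ^ i)
      rwa [← pow_add, Nat.add_sub_cancel' hi.le] at this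

theorem aeval_eq_zero_of_isHomogeneous {A : Type*} [CommRing A] (a b : A)
    {φ : MvPolynomial (Fin 2) ℤ} {m : ℕ} (hφ : φ.IsHomogeneous m)
    (hab : ∀ i j : ℕ, i + j = m → a ^ i * b ^ j = 0) :
    aeval ![a, b] φ = 0 := by
  rw [φ.as_sum, map_sum]
  apply Finset.sum_eq_zero
  intro d hd
  rw [aeval_monomial]
  have hdeg : d 0 + d 1 = m := by
    have h1 := hφ (mem_support_iff.mp hd)
    rw [← h1]
    rw [Finsupp.weight_apply]
    rw [Finsupp.sum_fintype _ _ (by intro i; simp)]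
    simp [Fin.sum_univ_two]
  have hprod : (d.prod fun i k => (![a, b] : Fin 2 → A) i ^ k) = a ^ d 0 * b ^ d 1 := by
    rw [Finsupp.prod_fintype _ _ (by intro i; exact pow_zero _)]
    simp [Fin.prod_univ_two]
  rw [hprod, hab _ _ hdeg, mul_zero]

theorem lam_dvd {R : Type*} [CommRing R] [IsDomain R] [IsDiscreteValuationRing R]
    {lam x y : R} (hx : lam ∣ x ^ p) (hy : lam ∣ y ^ p) {i j : ℕ} (hij : p ≤ i + j) :
    lam ∣ x ^ i * y ^ j := by
  rw [← IsDiscreteValuationRing.addVal_le_iff_dvd] at hx hy ⊢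
  rw [IsDiscreteValuationRing.addVal_pow] at hx hy
  rw [IsDiscreteValuationRing.addVal_mul, IsDiscreteValuationRing.addVal_pow,
    IsDiscreteValuationRing.addVal_pow]
  set v := IsDiscreteValuationRing.addVal R
  set m := min (v x) (v y) with hm
  have hpm : v lam ≤ p • m := by
    rcases min_cases (v x) (v y) with ⟨h1, _⟩ | ⟨h1, _⟩
    · rw [hm, h1]; exact hx
    · rw [hm, h1]; exact hy
  calc v lam ≤ p • m := hpm
    _ ≤ (i + j) • m := by
        obtain ⟨k, hk⟩ := Nat.exists_eq_add_of_le hij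
        rw [hk, add_nsmul]
        exact le_self_add
    _ = i • m + j • m := add_nsmul m i j
    _ ≤ i • v x + j • v y :=
        add_le_add (nsmul_le_nsmul_right (min_le_left _ _) i)
          (nsmul_le_nsmul_right (min_le_right _ _) j)

end Stmt2Aux

/-- Let `λ ∈ R` and `A := R/λR`. If `a, b ∈ A` satisfy `a^p = 0` and `b^p = 0`,
then the Teichmüller lifts add: `[a] + [b] = [a + b]` in `𝕎(A)`. -/
theorem stmt_2 (p : ℕ) [Fact p.Prime] (R : Type*) [CommRing R] [IsDomain R]
    [IsDiscreteValuationRing R] [CharZero R] [CharP (IsLocalRing.ResidueField R) p]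
    (lam : R)
    (a b : R ⧸ Ideal.span {lam}) (ha : a ^ p = 0) (hb : b ^ p = 0) :
    WittVector.teichmuller p a + WittVector.teichmuller p b
      = WittVector.teichmuller p (a + b) := by
  classical
  -- Key vanishing: all monomials of degree `≥ p` in `a, b` vanish.
  have hmon : ∀ i j : ℕ, p ≤ i + j → a ^ i * b ^ j = 0 := by
    intro i j hij
    obtain ⟨x, rfl⟩ := Ideal.Quotient.mk_surjective a
    obtain ⟨y, rfl⟩ := Ideal.Quotient.mk_surjective b
    have hx : lam ∣ x ^ p := by
      rw [← Ideal.mem_span_singleton, ← Ideal.Quotient.eq_zero_iff_mem, map_pow]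
      exact ha
    have hy : lam ∣ y ^ p := by
      rw [← Ideal.mem_span_singleton, ← Ideal.Quotient.eq_zero_iff_mem, map_pow]
      exact hb
    have := Stmt2Aux.lam_dvd p hx hy hij
    rw [← map_pow, ← map_pow, ← map_mul, Ideal.Quotient.eq_zero_iff_mem,
      Ideal.mem_span_singleton]
    exact this
  ext n
  rcases Nat.eq_zero_or_pos n with hn | hn
  · subst hn
    rw [WittVector.add_coeff_zero]
    simp [WittVector.teichmuller_coeff_zero]
  · rw [WittVector.teichmuller_coeff_pos _ _ _ hn, Stmt2Aux.S_spec]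
    apply Stmt2Aux.aeval_eq_zero_of_isHomogeneous (m := p ^ n)
    · exact Stmt2Aux.S_isHomogeneous p n
    · intro i j hij
      apply hmon
      rw [hij]
      calc p = p ^ 1 := (pow_one p).symm
        _ ≤ p ^ n := Nat.pow_le_pow_right (Fact.out : p.Prime).one_lt.le hn
end

section
/- Let μ, λ ∈ R be nonzero elements of the maximal ideal, set A := R/λR, and let μ̄ ∈ A denote the image of μ. Let a_1, …, a_{p−1} ∈ A, and adopt the conventions a_0 = 1 and a_i = 0 for i ≥ p. Then the following three statements are equivalent: (i) r! · a_r = ∏_{k=0}^{r−1}(a_1 − k·μ̄) for every 1 ≤ r ≤ p−1, and ∏_{k=0}^{p−1}(a_1 − k·μ̄) = 0; (ii) a_{r−1}·a_1 = (r−1)·μ̄·a_{r−1} + r·a_r for every 1 ≤ r ≤ p; (iii) a_r·a_l = Σ_{max(r,l) ≤ i ≤ r+l} [i!/((r+l−i)!·(i−l)!·(i−r)!)] · μ̄^{r+l−i} · a_i for all 1 ≤ r, l ≤ p−1 (the coefficient i!/((r+l−i)!(i−l)!(i−r)!) being a nonnegative integer). -/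
lemma coeff_nat (r l k : ℕ) (hkr : k ≤ r) (hkl : k ≤ l) :
    r.choose k * l.choose k * k.factorial * (r + l - k).factorial =
    r.factorial * l.factorial *
      ((r + l - k).factorial / (k.factorial * (r - k).factorial * (l - k).factorial)) := by
  have hD : k.factorial * (r - k).factorial * (l - k).factorial ∣ (r + l - k).factorial := by
    have h1 : k.factorial * (r - k).factorial ∣ r.factorial := by
      have := Nat.factorial_mul_factorial_dvd_factorial_add k (r - k)
      rwa [Nat.add_sub_cancel' hkr] at this
    have h2 : r.factorial * (l - k).factorial ∣ (r + l - k).factorial := by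
      have := Nat.factorial_mul_factorial_dvd_factorial_add r (l - k)
      rwa [show r + (l - k) = r + l - k by omega] at this
    exact (mul_dvd_mul_right h1 _).trans h2
  have hCD : r.choose k * l.choose k * k.factorial *
      (k.factorial * (r - k).factorial * (l - k).factorial) = r.factorial * l.factorial := by
    rw [← Nat.choose_mul_factorial_mul_factorial hkr, ← Nat.choose_mul_factorial_mul_factorial hkl]
    ring
  calc r.choose k * l.choose k * k.factorial * (r + l - k).factorial
      = r.choose k * l.choose k * k.factorial *
          ((k.factorial * (r - k).factorial * (l - k).factorial) *
            ((r + l - k).factorial / (k.factorial * (r - k).factorial * (l - k).factorial))) := by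
        rw [Nat.mul_div_cancel' hD]
    _ = (r.choose k * l.choose k * k.factorial *
          (k.factorial * (r - k).factorial * (l - k).factorial)) *
            ((r + l - k).factorial / (k.factorial * (r - k).factorial * (l - k).factorial)) := by
        ring
    _ = _ := by rw [hCD]

lemma key_prod {A : Type*} [CommRing A] (x m : A) (r l : ℕ) :
    (∏ j ∈ Finset.range r, (x - (j : A) * m)) * (∏ j ∈ Finset.range l, (x - (j : A) * m)) =
    ∑ k ∈ Finset.range (l + 1), ((r.choose k * l.choose k * k.factorial : ℕ) : A) * m ^ k *
      ∏ j ∈ Finset.range (r + l - k), (x - (j : A) * m) := by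
  induction l with
  | zero => simp
  | succ l ih =>
    rw [Finset.prod_range_succ, ← mul_assoc, ih, Finset.sum_mul]
    have hterm : ∀ k ∈ Finset.range (l + 1),
        ((r.choose k * l.choose k * k.factorial : ℕ) : A) * m ^ k *
            (∏ j ∈ Finset.range (r + l - k), (x - (j : A) * m)) * (x - (l : A) * m)
          = ((r.choose k * l.choose k * k.factorial : ℕ) : A) * m ^ k *
              (∏ j ∈ Finset.range (r + l + 1 - k), (x - (j : A) * m))
            + ((r.choose (k + 1) * l.choose k * (k + 1).factorial : ℕ) : A) * m ^ (k + 1) *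
              (∏ j ∈ Finset.range (r + l - k), (x - (j : A) * m)) := by
      intro k hk
      rw [Finset.mem_range] at hk
      by_cases hkr : k ≤ r
      · have h1 : r + l + 1 - k = (r + l - k) + 1 := by omega
        rw [h1, Finset.prod_range_succ]
        have h2 : ((r + l - k : ℕ) : A) * m = (l : A) * m + ((r - k : ℕ) : A) * m := by
          have h : ((r + l - k : ℕ) : A) = (l : A) + ((r - k : ℕ) : A) := by
            rw [show r + l - k = l + (r - k) by omega]; push_cast; ring
          rw [h]; ring
        have h3 : (r.choose (k + 1) * l.choose k * (k + 1).factorial : ℕ)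
            = r.choose k * l.choose k * k.factorial * (r - k) := by
          rw [Nat.factorial_succ, show r.choose (k+1) * l.choose k * ((k+1) * k.factorial)
            = (r.choose (k+1) * (k+1)) * l.choose k * k.factorial by ring,
            Nat.choose_succ_right_eq]
          ring
        rw [h3]
        push_cast
        ring_nf
        rw [show ((r + l - k : ℕ) : A) = (l : A) + ((r - k : ℕ) : A) from by
          rw [show r + l - k = l + (r - k) by omega]; push_cast; ring]
        ring
      · have h0 : r.choose k = 0 := Nat.choose_eq_zero_of_lt (by omega)
        have h0' : r.choose (k + 1) = 0 := Nat.choose_eq_zero_of_lt (by omega)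
        simp [h0, h0']
    rw [Finset.sum_congr rfl hterm, Finset.sum_add_distrib]
    have hsplit : ∀ k, ((r.choose k * (l + 1).choose k * k.factorial : ℕ) : A) * m ^ k *
          (∏ j ∈ Finset.range (r + l + 1 - k), (x - (j : A) * m))
        = ((r.choose k * l.choose k * k.factorial : ℕ) : A) * m ^ k *
            (∏ j ∈ Finset.range (r + l + 1 - k), (x - (j : A) * m))
          + ((r.choose k * ((l + 1).choose k - l.choose k) * k.factorial : ℕ) : A) * m ^ k *
            (∏ j ∈ Finset.range (r + l + 1 - k), (x - (j : A) * m)) := by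
      intro k
      have hle : l.choose k ≤ (l + 1).choose k := Nat.choose_le_choose k (by omega)
      generalize hd : (l + 1).choose k - l.choose k = d
      have h : (l + 1).choose k = l.choose k + d := by omega
      rw [h]
      push_cast
      ring
    rw [show (∑ k ∈ Finset.range (l + 1 + 1),
        ((r.choose k * (l + 1).choose k * k.factorial : ℕ) : A) * m ^ k *
          ∏ j ∈ Finset.range (r + (l + 1) - k), (x - (j : A) * m)) =
        ∑ k ∈ Finset.range (l + 2),
        (((r.choose k * l.choose k * k.factorial : ℕ) : A) * m ^ k *
            (∏ j ∈ Finset.range (r + l + 1 - k), (x - (j : A) * m))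
          + ((r.choose k * ((l + 1).choose k - l.choose k) * k.factorial : ℕ) : A) * m ^ k *
            (∏ j ∈ Finset.range (r + l + 1 - k), (x - (j : A) * m))) from
      Finset.sum_congr rfl (fun k _ => by
        rw [show r + (l + 1) - k = r + l + 1 - k by omega]; exact hsplit k)]
    rw [Finset.sum_add_distrib]
    congr 1
    · conv_rhs => rw [show l + 2 = (l + 1) + 1 by rfl, Finset.sum_range_succ]
      have h0 : ((r.choose (l+1) * l.choose (l+1) * (l+1).factorial : ℕ) : A) = 0 := by
        simp [Nat.choose_eq_zero_of_lt (by omega : l < l + 1)]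
      rw [h0]
      simp
    · rw [show l + 2 = (l + 1) + 1 by rfl,
        Finset.sum_range_succ' (fun k =>
          ((r.choose k * ((l + 1).choose k - l.choose k) * k.factorial : ℕ) : A) * m ^ k *
            (∏ j ∈ Finset.range (r + l + 1 - k), (x - (j : A) * m))) (l+1)]
      simp only [Nat.choose_zero_right, Nat.sub_self, Nat.mul_zero, Nat.zero_mul, Nat.cast_zero,
        zero_mul, add_zero]
      apply Finset.sum_congr rfl
      intro k hk
      have h : (l + 1).choose (k + 1) - l.choose (k + 1) = l.choose k := by
        rw [Nat.choose_succ_succ]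
        simp only [Nat.succ_eq_add_one]
        omega
      rw [h, show r + l + 1 - (k + 1) = r + l - k by omega]

lemma main_aux {A : Type*} [CommRing A] (p : ℕ) (hp : p.Prime)
    (hu : ∀ n : ℕ, n < p → IsUnit ((n.factorial : ℕ) : A)) (m : A)
    (a : ℕ → A) (ha0 : a 0 = 1) (hap : ∀ i, p ≤ i → a i = 0) :
    List.TFAE
      [ (∀ r, 1 ≤ r → r ≤ p - 1 →
            (Nat.factorial r : A) * a r =
              ∏ k ∈ Finset.range r, (a 1 - (k : A) * m)) ∧
          ∏ k ∈ Finset.range p, (a 1 - (k : A) * m) = 0,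
        ∀ r, 1 ≤ r → r ≤ p →
          a (r - 1) * a 1 =
            ((r - 1 : ℕ) : A) * m * a (r - 1) + (r : A) * a r,
        ∀ r l, 1 ≤ r → r ≤ p - 1 → 1 ≤ l → l ≤ p - 1 →
          a r * a l =
            ∑ i ∈ Finset.Icc (max r l) (r + l),
              ((Nat.factorial i /
                  (Nat.factorial (r + l - i) * Nat.factorial (i - l) * Nat.factorial (i - r)) :
                    ℕ) : A) * m ^ (r + l - i) * a i ] := by
  have hp1 : 1 ≤ p := hp.one_lt.le.trans' (by omega)
  have hfacgen : ((∀ r, 1 ≤ r → r ≤ p - 1 →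
        (Nat.factorial r : A) * a r = ∏ k ∈ Finset.range r, (a 1 - (k : A) * m)) ∧
      ∏ k ∈ Finset.range p, (a 1 - (k : A) * m) = 0) →
      ∀ r, r ≤ p → (Nat.factorial r : A) * a r =
        ∏ k ∈ Finset.range r, (a 1 - (k : A) * m) := by
    intro h1 r hr
    rcases Nat.eq_zero_or_pos r with h0 | h0
    · subst h0; simp [ha0]
    rcases eq_or_lt_of_le hr with hrp | hrp
    · subst hrp; rw [hap r le_rfl, h1.2, mul_zero]
    · exact h1.1 r h0 (by omega)
  tfae_have 1 → 2 := by
    intro h1 r hr1 hrp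
    have hfac := hfacgen h1
    obtain ⟨s, rfl⟩ : ∃ s, r = s + 1 := ⟨r - 1, by omega⟩
    simp only [Nat.add_sub_cancel]
    refine (hu s (by omega)).mul_left_cancel ?_
    have es : (s.factorial : A) * a s = ∏ k ∈ Finset.range s, (a 1 - (k : A) * m) :=
      hfac s (by omega)
    have es1 : ((s + 1).factorial : A) * a (s + 1) =
        ∏ k ∈ Finset.range (s + 1), (a 1 - (k : A) * m) := hfac (s + 1) hrp
    rw [Finset.prod_range_succ] at es1
    rw [Nat.factorial_succ] at es1
    push_cast at es1 ⊢
    linear_combination a 1 * es - ((s : A) * m) * es - es1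
  tfae_have 2 → 1 := by
    intro h2
    have hfac : ∀ r, r ≤ p - 1 → (Nat.factorial r : A) * a r =
        ∏ k ∈ Finset.range r, (a 1 - (k : A) * m) := by
      intro r
      induction r with
      | zero => intro _; simp [ha0]
      | succ s ih =>
        intro hs
        have es := ih (by omega)
        have h := h2 (s + 1) (by omega) (by omega)
        simp only [Nat.add_sub_cancel] at h
        rw [Finset.prod_range_succ, ← es, Nat.factorial_succ]
        push_cast
        push_cast at h
        linear_combination (-(s.factorial : A)) * h
    refine ⟨fun r _ hr => hfac r hr, ?_⟩
    obtain ⟨s, hs⟩ : ∃ s, p = s + 1 := ⟨p - 1, by omega⟩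
    have h := h2 p hp1 le_rfl
    rw [hap p le_rfl, mul_zero, add_zero] at h
    have es := hfac s (by omega)
    rw [hs] at h
    simp only [Nat.add_sub_cancel] at h
    rw [hs, Finset.prod_range_succ, ← es]
    linear_combination (s.factorial : A) * h
  tfae_have 1 → 3 := by
    intro h1 r l hr1 hr hl1 hl
    have hfac := hfacgen h1
    have hP0 : ∀ i, p ≤ i → ∏ k ∈ Finset.range i, (a 1 - (k : A) * m) = 0 := by
      intro i hi
      have h : (∏ k ∈ Finset.range p, (a 1 - (k : A) * m)) *
          ∏ k ∈ Finset.Ico p i, (a 1 - (k : A) * m) =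
          ∏ k ∈ Finset.range i, (a 1 - (k : A) * m) := by
        simp only [Finset.range_eq_Ico]
        exact Finset.prod_Ico_consecutive _ (Nat.zero_le p) hi
      rw [← h, h1.2, zero_mul]
    refine ((hu r (by omega)).mul (hu l (by omega))).mul_left_cancel ?_
    have hmin1 : min r l ≤ r := min_le_left r l
    have hmin2 : min r l ≤ l := min_le_right r l
    have hmax1 : r ≤ max r l := le_max_left r l
    have hmax2 : l ≤ max r l := le_max_right r l
    have hmm : min r l + max r l = r + l := min_add_max r l
    calc (↑r.factorial * ↑l.factorial) * (a r * a l)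
        = (↑r.factorial * a r) * (↑l.factorial * a l) := by ring
      _ = (∏ j ∈ Finset.range r, (a 1 - (j : A) * m)) *
            (∏ j ∈ Finset.range l, (a 1 - (j : A) * m)) := by
          rw [hfac r (by omega), hfac l (by omega)]
      _ = ∑ k ∈ Finset.range (l + 1), ((r.choose k * l.choose k * k.factorial : ℕ) : A) * m ^ k *
            ∏ j ∈ Finset.range (r + l - k), (a 1 - (j : A) * m) := key_prod _ _ _ _
      _ = ∑ k ∈ Finset.range (min r l + 1),
            ((r.choose k * l.choose k * k.factorial : ℕ) : A) * m ^ k *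
            ∏ j ∈ Finset.range (r + l - k), (a 1 - (j : A) * m) := by
          refine (Finset.sum_subset (Finset.range_subset_range.2 (by omega)) ?_).symm
          intro k hk hk'
          rw [Finset.mem_range] at hk hk'
          have : r < k := by omega
          simp [Nat.choose_eq_zero_of_lt this]
      _ = ∑ i ∈ Finset.Icc (max r l) (r + l),
            (↑r.factorial * ↑l.factorial) *
              (((Nat.factorial i /
                  (Nat.factorial (r + l - i) * Nat.factorial (i - l) * Nat.factorial (i - r)) :
                    ℕ) : A) * m ^ (r + l - i) * a i) := by
          refine Finset.sum_nbij' (fun k => r + l - k) (fun i => r + l - i) ?_ ?_ ?_ ?_ ?_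
          · intro k hk; rw [Finset.mem_range] at hk; rw [Finset.mem_Icc]; omega
          · intro i hi; rw [Finset.mem_Icc] at hi; rw [Finset.mem_range]; omega
          · intro k hk; rw [Finset.mem_range] at hk; omega
          · intro i hi; rw [Finset.mem_Icc] at hi; omega
          · intro k hk
            rw [Finset.mem_range] at hk
            have hkr : k ≤ r := by omega
            have hkl : k ≤ l := by omega
            rw [show r + l - (r + l - k) = k by omega,
              show r + l - k - l = r - k by omega,
              show r + l - k - r = l - k by omega]
            rcases lt_or_ge (r + l - k) p with hip | hip
            · rw [← hfac (r + l - k) (by omega)]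
              have hc := congrArg (fun n : ℕ => (n : A)) (coeff_nat r l k hkr hkl)
              push_cast at hc ⊢
              linear_combination (m ^ k * a (r + l - k)) * hc
            · rw [hP0 (r + l - k) hip, hap (r + l - k) hip]
              ring
      _ = (↑r.factorial * ↑l.factorial) *
            ∑ i ∈ Finset.Icc (max r l) (r + l),
              ((Nat.factorial i /
                  (Nat.factorial (r + l - i) * Nat.factorial (i - l) * Nat.factorial (i - r)) :
                    ℕ) : A) * m ^ (r + l - i) * a i := by
          rw [Finset.mul_sum]
  tfae_have 3 → 2 := by
    intro h3 r hr1 hrp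
    obtain ⟨s, rfl⟩ : ∃ s, r = s + 1 := ⟨r - 1, by omega⟩
    simp only [Nat.add_sub_cancel]
    rcases Nat.eq_zero_or_pos s with rfl | hs
    · simp [ha0]
    have h := h3 s 1 hs (by omega) le_rfl (by have := hp.two_le; omega)
    have hmax : max s 1 = s := by omega
    have hIcc : Finset.Icc s (s + 1) = {s, s + 1} := by
      ext i; simp [Finset.mem_Icc]; omega
    rw [hmax, hIcc, Finset.sum_insert (by simp), Finset.sum_singleton] at h
    have c1 : s.factorial /
        ((s + 1 - s).factorial * (s - 1).factorial * (s - s).factorial) = s := by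
      rw [show s + 1 - s = 1 by omega, Nat.sub_self]
      simp only [Nat.factorial_one, Nat.factorial_zero, one_mul, mul_one]
      rw [← Nat.mul_factorial_pred hs.ne', Nat.mul_div_cancel _ (Nat.factorial_pos _)]
    have c2 : (s + 1).factorial /
        ((s + 1 - (s + 1)).factorial * (s + 1 - 1).factorial * (s + 1 - s).factorial) = s + 1 := by
      rw [Nat.sub_self, show s + 1 - 1 = s by omega, show s + 1 - s = 1 by omega]
      simp only [Nat.factorial_zero, Nat.factorial_one, one_mul, mul_one]
      rw [Nat.factorial_succ, Nat.mul_div_cancel _ (Nat.factorial_pos _)]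
    rw [c1, c2] at h
    rw [show s + 1 - s = 1 by omega, Nat.sub_self] at h
    rw [h]
    push_cast
    ring
  tfae_finish

/-- Equivalence of three recursions/identities for the coefficients
`a_1, …, a_{p-1} ∈ A = R/λR` (with conventions `a_0 = 1`, `a_i = 0` for `i ≥ p`),
where `μ, λ` are nonzero elements of the maximal ideal of `R` and `μ̄` is the image
of `μ` in `A`. -/
theorem stmt_3 (p : ℕ) (hp : p.Prime) (R : Type*) [CommRing R] [IsDomain R]
    [IsDiscreteValuationRing R] [CharZero R] [CharP (IsLocalRing.ResidueField R) p]
    (μ lam : R) (hμ0 : μ ≠ 0) (hlam0 : lam ≠ 0)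
    (hμm : μ ∈ IsLocalRing.maximalIdeal R) (hlamm : lam ∈ IsLocalRing.maximalIdeal R)
    (a : ℕ → R ⧸ Ideal.span {lam}) (ha0 : a 0 = 1) (hap : ∀ i, p ≤ i → a i = 0) :
    List.TFAE
      [ (∀ r, 1 ≤ r → r ≤ p - 1 →
            (Nat.factorial r : R ⧸ Ideal.span {lam}) * a r =
              ∏ k ∈ Finset.range r,
                (a 1 - (k : R ⧸ Ideal.span {lam}) * Ideal.Quotient.mk (Ideal.span {lam}) μ)) ∧
          ∏ k ∈ Finset.range p,
              (a 1 - (k : R ⧸ Ideal.span {lam}) * Ideal.Quotient.mk (Ideal.span {lam}) μ) = 0,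
        ∀ r, 1 ≤ r → r ≤ p →
          a (r - 1) * a 1 =
            ((r - 1 : ℕ) : R ⧸ Ideal.span {lam}) * Ideal.Quotient.mk (Ideal.span {lam}) μ
                * a (r - 1)
              + (r : R ⧸ Ideal.span {lam}) * a r,
        ∀ r l, 1 ≤ r → r ≤ p - 1 → 1 ≤ l → l ≤ p - 1 →
          a r * a l =
            ∑ i ∈ Finset.Icc (max r l) (r + l),
              ((Nat.factorial i /
                  (Nat.factorial (r + l - i) * Nat.factorial (i - l) * Nat.factorial (i - r)) :
                    ℕ) : R ⧸ Ideal.span {lam}) *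
                Ideal.Quotient.mk (Ideal.span {lam}) μ ^ (r + l - i) * a i ] := by
  have hu : ∀ n : ℕ, n < p → IsUnit ((n.factorial : ℕ) : R ⧸ Ideal.span {lam}) := by
    intro n hn
    have hnd : ¬ p ∣ n.factorial := by
      rw [hp.dvd_factorial]; omega
    have hR : IsUnit ((n.factorial : ℕ) : R) := by
      by_contra hnu
      have hmem : ((n.factorial : ℕ) : R) ∈ IsLocalRing.maximalIdeal R :=
        (IsLocalRing.mem_maximalIdeal _).2 (mem_nonunits_iff.2 hnu)
      have h0 : ((n.factorial : ℕ) : IsLocalRing.ResidueField R) = 0 := by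
        rw [← map_natCast (IsLocalRing.residue R)]
        exact Ideal.Quotient.eq_zero_iff_mem.2 hmem
      exact hnd ((CharP.cast_eq_zero_iff _ p _).1 h0)
    have h := hR.map (Ideal.Quotient.mk (Ideal.span {lam}))
    rwa [map_natCast] at h
  exact main_aux p hp hu (Ideal.Quotient.mk (Ideal.span {lam}) μ) a ha0 hap
end

section
/- Let μ, λ ∈ R be nonzero elements of the maximal ideal, set A := R/λR with μ̄ ∈ A the image of μ, and let F ∈ A[S] be a polynomial of degree at most p−1, with constant coefficient a_0 and coefficient of S equal to a_1. Then the identity F(S)·F(T) − a_0² = F(S + T + μ̄·S·T) − a_0 holds in the polynomial ring A[S,T] if and only if the identity a_1·F(S) = F′(S)·(1 + μ̄·S) holds in A[S], where F′ denotes the formal derivative of F. -/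
open Polynomial

/-- Coefficient recursion from the ODE `C α * q = q' * (1 + C β * X)`. -/
lemma ode_coeff {S : Type*} [CommRing S] {α β : S} {q : Polynomial S}
    (h : Polynomial.C α * q = Polynomial.derivative q * (1 + Polynomial.C β * Polynomial.X))
    (n : ℕ) :
    ((n : S) + 1) * q.coeff (n + 1) = (α - (n : S) * β) * q.coeff n := by
  have hc := congrArg (fun r => Polynomial.coeff r n) h
  simp only [coeff_C_mul, mul_add, mul_one, coeff_add] at hc
  have hX : (Polynomial.derivative q * (Polynomial.C β * Polynomial.X)).coeff n
      = β * (q.coeff n * n) := by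
    cases n with
    | zero => simp
    | succ m =>
        have : Polynomial.derivative q * (Polynomial.C β * Polynomial.X)
            = Polynomial.C β * (Polynomial.derivative q * Polynomial.X) := by ring
        rw [this, coeff_C_mul, coeff_mul_X, coeff_derivative]
        push_cast
        ring
  rw [hX, coeff_derivative] at hc
  linear_combination -hc

/-- Propagation of vanishing along the coefficient recursion. -/
lemma vanish {S : Type*} [CommRing S] {p : ℕ} (hp : 0 < p)
    (hu : ∀ n : ℕ, 0 < n → n < p → IsUnit ((n : S)))
    {α β c : S} {q : Polynomial S}
    (rec : ∀ n : ℕ, ((n : S) + 1) * q.coeff (n + 1) = (α - (n : S) * β) * q.coeff n)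
    (hdeg : q.natDegree ≤ p - 1) (k : ℕ) (hbase : c * q.coeff k = 0) :
    ∀ n, k ≤ n → c * q.coeff n = 0 := by
  intro n hn
  induction n, hn using Nat.le_induction with
  | base => exact hbase
  | succ n hn ih =>
      by_cases hbig : p - 1 < n + 1
      · rw [Polynomial.coeff_eq_zero_of_natDegree_lt (lt_of_le_of_lt hdeg hbig), mul_zero]
      · have hlt : n + 1 < p := lt_of_le_of_lt (not_lt.mp hbig) (Nat.sub_lt hp one_pos)
        have hu' : IsUnit ((n : S) + 1) := by
          have := hu (n + 1) (Nat.succ_pos n) hlt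
          push_cast at this
          exact this
        have h0 : ((n : S) + 1) * (c * q.coeff (n + 1)) = 0 := by
          have := rec n
          calc ((n : S) + 1) * (c * q.coeff (n + 1))
              = c * (((n : S) + 1) * q.coeff (n + 1)) := by ring
            _ = (α - (n : S) * β) * (c * q.coeff n) := by rw [this]; ring
            _ = 0 := by rw [ih, mul_zero]
        exact (IsUnit.mul_right_eq_zero hu').mp h0

lemma key {S : Type*} [CommRing S] [Nontrivial S] {p : ℕ} (hp : p.Prime)
    (hu : ∀ n : ℕ, 0 < n → n < p → IsUnit ((n : S))) (μ : S) (F : Polynomial S)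
    (hdeg : F.natDegree ≤ p - 1)
    (hODE : Polynomial.C (F.coeff 1) * F
      = Polynomial.derivative F * (1 + Polynomial.C μ * Polynomial.X)) :
    Polynomial.C F * F.map (Polynomial.C : S →+* Polynomial S)
        - Polynomial.C (Polynomial.C (F.coeff 0 ^ 2))
      = (F.map (Polynomial.C : S →+* Polynomial S)).comp
          (Polynomial.C Polynomial.X
            + Polynomial.C (1 + Polynomial.C μ * Polynomial.X) * Polynomial.X)
        - Polynomial.C (Polynomial.C (F.coeff 0)) := by
  set g : Polynomial (Polynomial S) :=
    Polynomial.C Polynomial.X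
      + Polynomial.C (1 + Polynomial.C μ * Polynomial.X) * Polynomial.X with hg
  set Fm : Polynomial (Polynomial S) := F.map (Polynomial.C : S →+* Polynomial S) with hFm
  -- coefficient recursion for F
  have recF := ode_coeff hODE
  have L3 : F.coeff 1 * (F.coeff 0 - 1) = 0 := by
    have h0 := recF 0
    push_cast at h0
    linear_combination -h0
  have L4 : ∀ n, 1 ≤ n → (F.coeff 0 - 1) * F.coeff n = 0 := by
    refine vanish hp.pos hu recF hdeg 1 ?_
    rw [mul_comm]; exact L3
  have hF0 : (Polynomial.C (F.coeff 0) - 1) * (F - Polynomial.C (F.coeff 0)) = 0 := by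
    have hC : (Polynomial.C (F.coeff 0) - 1 : Polynomial S)
        = Polynomial.C (F.coeff 0 - 1) := by rw [map_sub, map_one]
    rw [hC]
    ext n
    rw [coeff_C_mul, coeff_zero]
    cases n with
    | zero => simp
    | succ m =>
        rw [coeff_sub, coeff_C]
        simp only [Nat.succ_ne_zero, if_false, sub_zero]
        exact L4 (m + 1) (Nat.succ_le_succ (Nat.zero_le m))
  -- the mapped ODE
  have hODE' : Polynomial.C (Polynomial.C (F.coeff 1)) * Fm
      = Polynomial.derivative Fm
          * (1 + Polynomial.C (Polynomial.C μ) * Polynomial.X) := by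
    have := congrArg (Polynomial.map (Polynomial.C : S →+* Polynomial S)) hODE
    simpa [hFm, derivative_map] using this
  set u : Polynomial (Polynomial S) :=
    Polynomial.C F * Fm - Polynomial.C (Polynomial.C (F.coeff 0 ^ 2))
      - ((Fm.comp g) - Polynomial.C (Polynomial.C (F.coeff 0))) with hudef
  -- P2 : u.coeff 0 = 0
  have P2 : u.coeff 0 = 0 := by
    have hcomp0 : (Fm.comp g).coeff 0 = F := by
      rw [coeff_zero_eq_eval_zero, eval_comp]
      have h0 : g.eval 0 = Polynomial.X := by simp [hg]
      rw [h0, hFm, eval_map]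
      exact eval₂_C_X
    have hFm0 : Fm.coeff 0 = Polynomial.C (F.coeff 0) := by rw [hFm, coeff_map]
    rw [hudef]
    simp only [coeff_sub, coeff_C_mul, hcomp0, hFm0, coeff_C_zero]
    rw [map_pow]
    linear_combination hF0
  -- P1 : the ODE for u
  have P1 : Polynomial.C (Polynomial.C (F.coeff 1)) * u
      = Polynomial.derivative u * (1 + Polynomial.C (Polynomial.C μ) * Polynomial.X) := by
    have hdg : Polynomial.derivative g
        = Polynomial.C (1 + Polynomial.C μ * Polynomial.X) := by
      simp [hg]
    have hdu : Polynomial.derivative u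
        = Polynomial.C F * Polynomial.derivative Fm
          - Polynomial.C (1 + Polynomial.C μ * Polynomial.X)
              * (Polynomial.derivative Fm).comp g := by
      rw [hudef]
      simp only [derivative_sub, derivative_mul, derivative_C, zero_mul, zero_add,
        derivative_comp, hdg]
      ring
    have hmu : Polynomial.C (1 + Polynomial.C μ * Polynomial.X)
          * (1 + Polynomial.C (Polynomial.C μ) * Polynomial.X)
        = 1 + Polynomial.C (Polynomial.C μ) * g := by
      rw [hg]
      simp only [map_add, map_one, map_mul]
      ring
    have hcompODE : Polynomial.C (Polynomial.C (F.coeff 1)) * Fm.comp g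
        = (Polynomial.derivative Fm).comp g
            * (1 + Polynomial.C (Polynomial.C μ) * g) := by
      have := congrArg (fun r => Polynomial.comp r g) hODE'
      simpa only [mul_comp, C_comp, add_comp, one_comp, X_comp] using this
    have ha' : Polynomial.C (Polynomial.C (F.coeff 1))
          * Polynomial.C (Polynomial.C (F.coeff 0 ^ 2))
        = Polynomial.C (Polynomial.C (F.coeff 1))
          * Polynomial.C (Polynomial.C (F.coeff 0)) := by
      rw [← map_mul, ← map_mul, ← map_mul, ← map_mul, ← sub_eq_zero, ← map_sub, ← map_sub]
      rw [show F.coeff 1 * F.coeff 0 ^ 2 - F.coeff 1 * F.coeff 0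
          = F.coeff 0 * (F.coeff 1 * (F.coeff 0 - 1)) by ring, L3, mul_zero, map_zero, map_zero]
    have expand : Polynomial.derivative u
          * (1 + Polynomial.C (Polynomial.C μ) * Polynomial.X)
        = Polynomial.C F
            * (Polynomial.derivative Fm
              * (1 + Polynomial.C (Polynomial.C μ) * Polynomial.X))
          - (Polynomial.derivative Fm).comp g
            * (Polynomial.C (1 + Polynomial.C μ * Polynomial.X)
              * (1 + Polynomial.C (Polynomial.C μ) * Polynomial.X)) := by
      rw [hdu]; ring
    rw [expand, ← hODE', hmu, ← hcompODE, hudef]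
    linear_combination -ha'
  -- P3 : degree bound
  have P3 : u.natDegree ≤ p - 1 := by
    have h1 : (Polynomial.C F * Fm).natDegree ≤ p - 1 := by
      refine le_trans natDegree_mul_le ?_
      rw [natDegree_C, zero_add]
      exact le_trans natDegree_map_le hdeg
    have hgdeg : g.natDegree ≤ 1 := by
      refine le_trans (natDegree_add_le _ _) (max_le ?_ ?_)
      · rw [natDegree_C]; exact Nat.zero_le _
      · exact le_trans natDegree_mul_le (by rw [natDegree_C, natDegree_X])
    have h2 : (Fm.comp g).natDegree ≤ p - 1 := by
      refine le_trans natDegree_comp_le ?_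
      calc Fm.natDegree * g.natDegree ≤ (p - 1) * 1 :=
            Nat.mul_le_mul (le_trans natDegree_map_le hdeg) hgdeg
        _ = p - 1 := mul_one _
    refine le_trans (natDegree_sub_le _ _) (max_le (le_trans (natDegree_sub_le _ _)
      (max_le h1 (by rw [natDegree_C]; exact Nat.zero_le _)))
      (le_trans (natDegree_sub_le _ _)
      (max_le h2 (by rw [natDegree_C]; exact Nat.zero_le _))))
  -- units in Polynomial S
  have hunit : ∀ n : ℕ, 0 < n → n < p → IsUnit ((n : Polynomial S)) := by
    intro n h1 h2
    have := (hu n h1 h2).map (Polynomial.C : S →+* Polynomial S)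
    rwa [map_natCast] at this
  -- conclude u = 0
  have hu0 : u = 0 := by
    refine Polynomial.ext fun n => ?_
    have := vanish (c := (1 : Polynomial S)) hp.pos hunit (ode_coeff P1) P3 0
      (by rw [P2, mul_zero]) n (Nat.zero_le n)
    rw [one_mul] at this
    rw [this, coeff_zero]
  rw [hudef] at hu0
  linear_combination hu0
/-- For `μ, λ` nonzero elements of the maximal ideal of `R`, `A := R/λR`,
`μ̄` the image of `μ`, and `F ∈ A[S]` of degree at most `p-1` with constant coefficient
`a₀` and linear coefficient `a₁`: the identity `F(S)·F(T) - a₀² = F(S + T + μ̄·S·T) - a₀`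
holds in `A[S,T]` iff `a₁·F(S) = F'(S)·(1 + μ̄·S)` holds in `A[S]`. -/
theorem stmt_4 (p : ℕ) (hp : p.Prime) (R : Type*) [CommRing R] [IsDomain R]
    [IsDiscreteValuationRing R] [CharZero R] [CharP (IsLocalRing.ResidueField R) p]
    (μ lam : R) (hμ0 : μ ≠ 0) (hlam0 : lam ≠ 0)
    (hμm : μ ∈ IsLocalRing.maximalIdeal R) (hlamm : lam ∈ IsLocalRing.maximalIdeal R)
    (F : Polynomial (R ⧸ Ideal.span {lam})) (hdeg : F.natDegree ≤ p - 1) :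
    (Polynomial.aeval (MvPolynomial.X 0 : MvPolynomial (Fin 2) (R ⧸ Ideal.span {lam})) F *
          Polynomial.aeval (MvPolynomial.X 1 : MvPolynomial (Fin 2) (R ⧸ Ideal.span {lam})) F -
          MvPolynomial.C (F.coeff 0) ^ 2 =
        Polynomial.aeval
            (MvPolynomial.X 0 + MvPolynomial.X 1 +
              MvPolynomial.C (Ideal.Quotient.mk (Ideal.span {lam}) μ) * MvPolynomial.X 0 *
                MvPolynomial.X 1 : MvPolynomial (Fin 2) (R ⧸ Ideal.span {lam})) F -
          MvPolynomial.C (F.coeff 0)) ↔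
      Polynomial.C (F.coeff 1) * F =
        Polynomial.derivative F *
          (1 + Polynomial.C (Ideal.Quotient.mk (Ideal.span {lam}) μ) * Polynomial.X) := by
  have hlamtop : Ideal.span {lam} ≠ ⊤ := by
    intro h
    have hle : Ideal.span {lam} ≤ IsLocalRing.maximalIdeal R := by
      rw [Ideal.span_le, Set.singleton_subset_iff]; exact hlamm
    rw [h] at hle
    exact (IsLocalRing.maximalIdeal.isMaximal R).ne_top (top_le_iff.mp hle)
  haveI : Nontrivial (R ⧸ Ideal.span {lam}) := Ideal.Quotient.nontrivial_iff.mpr hlamtop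
  have hu : ∀ n : ℕ, 0 < n → n < p → IsUnit ((n : R ⧸ Ideal.span {lam})) := by
    intro n h1 h2
    have hR : IsUnit ((n : R)) := by
      rw [← IsLocalRing.notMem_maximalIdeal]
      intro hmem
      have h0 : (IsLocalRing.residue R) ((n : ℕ) : R) = 0 :=
        (IsLocalRing.residue_eq_zero_iff _).mpr hmem
      rw [map_natCast] at h0
      have hdvd := (CharP.cast_eq_zero_iff (IsLocalRing.ResidueField R) p n).mp h0
      exact absurd (Nat.le_of_dvd h1 hdvd) (not_le.mpr h2)
    have := hR.map (Ideal.Quotient.mk (Ideal.span {lam}))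
    rwa [map_natCast] at this
  set μ' : R ⧸ Ideal.span {lam} := Ideal.Quotient.mk (Ideal.span {lam}) μ with hμ'
  constructor
  · -- forward direction
    intro H
    set G : MvPolynomial (Fin 2) (R ⧸ Ideal.span {lam}) :=
      MvPolynomial.X 0 + MvPolynomial.X 1 +
        MvPolynomial.C μ' * MvPolynomial.X 0 * MvPolynomial.X 1 with hG
    have d1 : MvPolynomial.pderiv (1 : Fin 2)
        (Polynomial.aeval (MvPolynomial.X (0 : Fin 2)
          : MvPolynomial (Fin 2) (R ⧸ Ideal.span {lam})) F) = 0 := by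
      rw [Derivation.map_aeval,
        MvPolynomial.pderiv_X_of_ne (show (0 : Fin 2) ≠ 1 by decide), smul_zero]
    have d2 : MvPolynomial.pderiv (1 : Fin 2)
        (Polynomial.aeval (MvPolynomial.X (1 : Fin 2)
          : MvPolynomial (Fin 2) (R ⧸ Ideal.span {lam})) F)
        = Polynomial.aeval (MvPolynomial.X (1 : Fin 2)
            : MvPolynomial (Fin 2) (R ⧸ Ideal.span {lam})) (Polynomial.derivative F) := by
      rw [Derivation.map_aeval, MvPolynomial.pderiv_X_self, smul_eq_mul, mul_one]
    have d3 : MvPolynomial.pderiv (1 : Fin 2) G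
        = 1 + MvPolynomial.C μ' * MvPolynomial.X 0 := by
      rw [hG]
      simp only [map_add, Derivation.leibniz, MvPolynomial.pderiv_X_self,
        MvPolynomial.pderiv_X_of_ne (show (0 : Fin 2) ≠ 1 by decide),
        MvPolynomial.pderiv_C, smul_eq_mul]
      ring
    have d4 : MvPolynomial.pderiv (1 : Fin 2) (Polynomial.aeval G F)
        = Polynomial.aeval G (Polynomial.derivative F)
            * (1 + MvPolynomial.C μ' * MvPolynomial.X 0) := by
      rw [Derivation.map_aeval, d3, smul_eq_mul]
    have hD : Polynomial.aeval (MvPolynomial.X (0 : Fin 2)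
          : MvPolynomial (Fin 2) (R ⧸ Ideal.span {lam})) F *
          Polynomial.aeval (MvPolynomial.X (1 : Fin 2)
            : MvPolynomial (Fin 2) (R ⧸ Ideal.span {lam})) (Polynomial.derivative F)
        = Polynomial.aeval G (Polynomial.derivative F)
            * (1 + MvPolynomial.C μ' * MvPolynomial.X 0) := by
      have hD0 := congrArg (⇑(MvPolynomial.pderiv (1 : Fin 2))) H
      rw [← map_pow] at hD0
      rw [map_sub, map_sub, Derivation.leibniz, d1, d2, d4,
        MvPolynomial.pderiv_C, MvPolynomial.pderiv_C] at hD0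
      simpa [smul_eq_mul] using hD0
    set φ : MvPolynomial (Fin 2) (R ⧸ Ideal.span {lam}) →ₐ[R ⧸ Ideal.span {lam}]
        Polynomial (R ⧸ Ideal.span {lam}) :=
      MvPolynomial.aeval ![Polynomial.X, (0 : Polynomial (R ⧸ Ideal.span {lam}))] with hφ
    have e0 : φ (MvPolynomial.X 0) = Polynomial.X := by
      rw [hφ, MvPolynomial.aeval_X]; rfl
    have e0' : φ (MvPolynomial.X 1) = 0 := by
      rw [hφ, MvPolynomial.aeval_X]; rfl
    have e1 : φ (Polynomial.aeval (MvPolynomial.X (0 : Fin 2)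
        : MvPolynomial (Fin 2) (R ⧸ Ideal.span {lam})) F) = F := by
      rw [← Polynomial.aeval_algHom_apply, e0, Polynomial.aeval_X_left_apply]
    have e2 : φ (Polynomial.aeval (MvPolynomial.X (1 : Fin 2)
        : MvPolynomial (Fin 2) (R ⧸ Ideal.span {lam})) (Polynomial.derivative F))
        = Polynomial.C (F.coeff 1) := by
      rw [← Polynomial.aeval_algHom_apply, e0', Polynomial.aeval_def, Polynomial.eval₂_at_zero,
        Polynomial.coeff_derivative, Polynomial.algebraMap_eq]
      norm_num
    have eG : φ G = Polynomial.X := by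
      rw [hG]
      simp only [map_add, map_mul, e0, e0', MvPolynomial.aeval_C, hφ]
      simp
    have e3 : φ (Polynomial.aeval G (Polynomial.derivative F))
        = Polynomial.derivative F := by
      rw [← Polynomial.aeval_algHom_apply, eG, Polynomial.aeval_X_left_apply]
    have e4 : φ (MvPolynomial.C μ') = Polynomial.C μ' := by
      rw [MvPolynomial.aeval_C, Polynomial.algebraMap_eq]
    have hE := congrArg (⇑φ) hD
    rw [map_mul, map_mul, map_add, map_mul, map_one, e1, e2, e3, e4, e0] at hE
    linear_combination hE
  · -- backward direction
    intro hODE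
    have hk := key hp hu μ' F hdeg hODE
    set f : (R ⧸ Ideal.span {lam}) →+* MvPolynomial (Fin 2) (R ⧸ Ideal.span {lam}) :=
      (MvPolynomial.C : (R ⧸ Ideal.span {lam}) →+* MvPolynomial (Fin 2) (R ⧸ Ideal.span {lam})) with hf
    set Θin : Polynomial (R ⧸ Ideal.span {lam})
        →+* MvPolynomial (Fin 2) (R ⧸ Ideal.span {lam}) :=
      Polynomial.eval₂RingHom f (MvPolynomial.X 0) with hΘin
    have hcomp : Θin.comp Polynomial.C = f := by
      ext a
      simp [hΘin]
    have hk' := congrArg (⇑(Polynomial.eval₂RingHom Θin (MvPolynomial.X (1 : Fin 2)))) hk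
    simp only [map_sub, map_mul, Polynomial.coe_eval₂RingHom, Polynomial.eval₂_C] at hk'
    have hΘC : ∀ a, Θin (Polynomial.C a) = f a := fun a => by
      rw [← hcomp]; rfl
    rw [Polynomial.eval₂_comp, Polynomial.eval₂_map, Polynomial.eval₂_map, hcomp,
      hΘC, hΘC] at hk'
    have harg : Polynomial.eval₂ Θin (MvPolynomial.X (1 : Fin 2))
          (Polynomial.C Polynomial.X
            + Polynomial.C (1 + Polynomial.C μ' * Polynomial.X) * Polynomial.X)
        = MvPolynomial.X 0 + MvPolynomial.X 1 +
            MvPolynomial.C μ' * MvPolynomial.X 0 * MvPolynomial.X 1 := by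
      rw [Polynomial.eval₂_add, Polynomial.eval₂_mul, Polynomial.eval₂_C, Polynomial.eval₂_C,
        Polynomial.eval₂_X]
      rw [hΘin]
      simp only [Polynomial.coe_eval₂RingHom, Polynomial.eval₂_X, map_add, map_one, map_mul,
        Polynomial.eval₂_add, Polynomial.eval₂_one, Polynomial.eval₂_mul, Polynomial.eval₂_C]
      ring
    rw [harg] at hk'
    have haev : ∀ (x : MvPolynomial (Fin 2) (R ⧸ Ideal.span {lam})) (q : Polynomial _),
        Polynomial.aeval x q = Polynomial.eval₂ f x q := by
      intro x q
      rw [Polynomial.aeval_def, hf, MvPolynomial.algebraMap_eq]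
    rw [haev, haev, haev, show (MvPolynomial.C (F.coeff 0) : MvPolynomial (Fin 2)
      (R ⧸ Ideal.span {lam})) ^ 2 = f (F.coeff 0 ^ 2) by rw [hf, map_pow]]
    have hΘinF : Θin F = Polynomial.eval₂ f (MvPolynomial.X 0) F := by
      rw [hΘin]; rfl
    rw [hΘinF] at hk'
    exact hk'
end

section
/- Let λ ∈ R be a nonzero element of the maximal ideal and set A := R/λR. Let a ∈ A and let F ∈ A[S] be a polynomial of degree at most p−1 with F(0) = 1 satisfying the differential equation F′(S) = a·F(S) in A[S] (F′ the formal derivative). Then necessarily a^p = 0 and F = Σ_{i=0}^{p−1} ((i!)^{−1}·a^i)·S^i; in particular the solution is unique. -/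
/-- Let `λ` be a nonzero element of the maximal ideal of `R`, `A := R/λR`.
If `F ∈ A[S]` has degree at most `p-1`, `F(0) = 1` and `F' = a·F`, then `a^p = 0` and
`F = Σ_{i=0}^{p-1} (i!)⁻¹·a^i·S^i`; in particular the solution is unique. -/
theorem stmt_7 (p : ℕ) (hp : p.Prime) (R : Type*) [CommRing R] [IsDomain R]
    [IsDiscreteValuationRing R] [CharZero R] [CharP (IsLocalRing.ResidueField R) p]
    (lam : R) (hlam0 : lam ≠ 0) (hlamm : lam ∈ IsLocalRing.maximalIdeal R)
    (a : R ⧸ Ideal.span {lam}) (F : Polynomial (R ⧸ Ideal.span {lam}))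
    (hdeg : F.natDegree ≤ p - 1) (hF0 : F.eval 0 = 1)
    (hode : Polynomial.derivative F = Polynomial.C a * F) :
    a ^ p = 0 ∧
      F = ∑ i ∈ Finset.range p,
            Polynomial.C (Ring.inverse (Nat.factorial i : R ⧸ Ideal.span {lam}) * a ^ i) *
              Polynomial.X ^ i := by
  have hppos : 0 < p := hp.pos
  -- natural numbers 0 < i < p are units in R
  have hiR : ∀ i : ℕ, 0 < i → i < p → IsUnit (i : R) := by
    intro i h1 h2
    by_contra h
    have hmem : (i : R) ∈ IsLocalRing.maximalIdeal R := h
    have : (IsLocalRing.residue R) (i : R) = 0 :=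
      (IsLocalRing.residue_eq_zero_iff _).mpr hmem
    rw [map_natCast] at this
    have hdvd := (CharP.cast_eq_zero_iff (IsLocalRing.ResidueField R) p i).mp this
    have := Nat.le_of_dvd h1 hdvd
    omega
  -- factorials of i < p are units in A
  have hfA : ∀ i : ℕ, i < p → IsUnit ((Nat.factorial i : R ⧸ Ideal.span {lam})) := by
    intro i hi
    have hR : IsUnit ((Nat.factorial i : R)) := by
      induction i with
      | zero => simp
      | succ n ih =>
        rw [Nat.factorial_succ, Nat.cast_mul]
        exact (hiR (n + 1) (Nat.succ_pos n) hi).mul (ih (by omega))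
    have := hR.map (Ideal.Quotient.mk (Ideal.span {lam}))
    simpa using this
  -- recurrence
  have hrec : ∀ i : ℕ,
      F.coeff (i + 1) * ((i : R ⧸ Ideal.span {lam}) + 1) = a * F.coeff i := by
    intro i
    have := congrArg (fun g => Polynomial.coeff g i) hode
    simpa [Polynomial.coeff_derivative, Polynomial.coeff_C_mul] using this
  -- key claim
  have hc : ∀ i : ℕ, i < p →
      (Nat.factorial i : R ⧸ Ideal.span {lam}) * F.coeff i = a ^ i := by
    intro i
    induction i with
    | zero =>
      intro _
      simpa [Polynomial.coeff_zero_eq_eval_zero] using hF0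
    | succ n ih =>
      intro hn
      have h1 := hrec n
      have h2 := ih (by omega)
      rw [Nat.factorial_succ, Nat.cast_mul, pow_succ]
      push_cast
      calc ((n : R ⧸ Ideal.span {lam}) + 1) * (Nat.factorial n : R ⧸ Ideal.span {lam})
            * F.coeff (n + 1)
          = (Nat.factorial n : R ⧸ Ideal.span {lam})
            * (F.coeff (n + 1) * ((n : R ⧸ Ideal.span {lam}) + 1)) := by ring
        _ = (Nat.factorial n : R ⧸ Ideal.span {lam}) * (a * F.coeff n) := by rw [h1]
        _ = a ^ n * a := by rw [← h2]; ring
  have hcoeff : ∀ i : ℕ, i < p →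
      F.coeff i = Ring.inverse (Nat.factorial i : R ⧸ Ideal.span {lam}) * a ^ i := by
    intro i hi
    rw [← hc i hi, ← mul_assoc, Ring.inverse_mul_cancel _ (hfA i hi), one_mul]
  have hcp : F.coeff p = 0 :=
    Polynomial.coeff_eq_zero_of_natDegree_lt (lt_of_le_of_lt hdeg (by omega))
  have hp1 : p - 1 + 1 = p := Nat.succ_pred_eq_of_pos hppos
  have h1 : a * F.coeff (p - 1) = 0 := by
    have := hrec (p - 1)
    rw [hp1, hcp, zero_mul] at this
    exact this.symm
  have h2 := hc (p - 1) (by omega)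
  have hap : a ^ p = 0 := by
    calc a ^ p = a * a ^ (p - 1) := by rw [← pow_succ', hp1]
      _ = a * ((Nat.factorial (p - 1) : R ⧸ Ideal.span {lam}) * F.coeff (p - 1)) := by
          rw [h2]
      _ = (Nat.factorial (p - 1) : R ⧸ Ideal.span {lam}) * (a * F.coeff (p - 1)) := by
          ring
      _ = 0 := by rw [h1, mul_zero]
  refine ⟨hap, ?_⟩
  ext n
  rw [Polynomial.finset_sum_coeff]
  simp only [Polynomial.coeff_C_mul, Polynomial.coeff_X_pow, mul_ite, mul_one, mul_zero]
  rw [Finset.sum_ite_eq (Finset.range p) n]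
  by_cases hn : n < p
  · rw [if_pos (Finset.mem_range.mpr hn)]
    exact hcoeff n hn
  · rw [if_neg (by simpa using hn)]
    exact Polynomial.coeff_eq_zero_of_natDegree_lt (lt_of_le_of_lt hdeg (by omega))
end

section
/- Assume p > 2. Let μ, λ ∈ R be nonzero with v(p) ≥ (p−1)·v(μ) > 0 and v(μ) ≥ v(λ) > 0, let c₀ ∈ R be the element with c₀·μ^{p−1} = p, set A := R/λR and let c ∈ A be the image of c₀. Suppose a ∈ A satisfies a^p = 0 and b ∈ 𝕎(A) lies in Ŵ(A) with F(b) = 0. If [c]·b + V(b) = [a] in 𝕎(A), then b = 0 and a = 0. -/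
open MvPolynomial

namespace Stmt8Aux

variable {p : ℕ} [hp : Fact p.Prime]

lemma fin2_cases (i : Fin 2) : i = 0 ∨ i = 1 := by
  rcases i with ⟨iv, hi⟩
  interval_cases iv
  · exact Or.inl rfl
  · exact Or.inr rfl

section PolyLemmas

variable {B : Type*} [CommRing B]

lemma aeval_sub_const_mem (K : Ideal B) (v : Fin 2 × ℕ → B) (hv : ∀ s, v s ∈ K)
    (P : MvPolynomial (Fin 2 × ℕ) ℤ) :
    aeval v P - algebraMap ℤ B (constantCoeff P) ∈ K := by
  induction P using MvPolynomial.induction_on with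
  | C z => simp
  | add P Q hP hQ =>
      have h := K.add_mem hP hQ
      rw [map_add, map_add, map_add]
      convert h using 1
      ring
  | mul_X P s hP =>
      rw [map_mul, map_mul, aeval_X, constantCoeff_X, mul_zero, map_zero, sub_zero]
      exact K.mul_mem_left _ (hv s)

lemma aeval_split (I J : Ideal B) (g : Fin 2 × ℕ → B)
    (hI : ∀ m, g (0, m) ∈ I) (hJ : ∀ m, g (1, m) ∈ J)
    (hIJ : ∀ x ∈ I, ∀ y ∈ J, x * y = 0) (P : MvPolynomial (Fin 2 × ℕ) ℤ) :
    aeval g P =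
      aeval (fun s => if s.1 = 0 then g s else 0) P
        + aeval (fun s => if s.1 = 1 then g s else 0) P
        - algebraMap ℤ B (constantCoeff P) := by
  have hg0 : ∀ s : Fin 2 × ℕ, (if s.1 = 0 then g s else 0) ∈ I := by
    rintro ⟨i, m⟩
    by_cases h : i = 0
    · subst h; simpa using hI m
    · simp [h]
  have hg1 : ∀ s : Fin 2 × ℕ, (if s.1 = 1 then g s else 0) ∈ J := by
    rintro ⟨i, m⟩
    by_cases h : i = 1
    · subst h; simpa using hJ m
    · simp [h]
  induction P using MvPolynomial.induction_on with
  | C z => simp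
  | add P Q hP hQ =>
      simp only [map_add]
      rw [hP, hQ]
      ring
  | mul_X P s hP =>
      obtain ⟨i, m⟩ := s
      rw [map_mul, map_mul, map_mul, map_mul, aeval_X, aeval_X, aeval_X,
        constantCoeff_X, mul_zero, map_zero, hP]
      rcases fin2_cases i with rfl | rfl
      · have h1 : aeval (fun s : Fin 2 × ℕ => if s.1 = 1 then g s else 0) P
            - algebraMap ℤ B (constantCoeff P) ∈ J :=
          aeval_sub_const_mem J _ hg1 P
        have hz := hIJ _ (hI m) _ h1
        simp only [show ((((0 : Fin 2), m) : Fin 2 × ℕ).1 = 0) ↔ True by simp,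
          show ((((0 : Fin 2), m) : Fin 2 × ℕ).1 = 1) ↔ False by simp, if_true, if_false]
        linear_combination hz
      · have h1 : aeval (fun s : Fin 2 × ℕ => if s.1 = 0 then g s else 0) P
            - algebraMap ℤ B (constantCoeff P) ∈ I :=
          aeval_sub_const_mem I _ hg0 P
        have hz := hIJ _ h1 _ (hJ m)
        simp only [show ((((1 : Fin 2), m) : Fin 2 × ℕ).1 = 0) ↔ False by simp,
          show ((((1 : Fin 2), m) : Fin 2 × ℕ).1 = 1) ↔ True by simp, if_true, if_false]
        linear_combination hz

lemma aeval_mem_mul (I J : Ideal B) (g : Fin 2 × ℕ → B)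
    (hI : ∀ m, g (0, m) ∈ I) (hJ : ∀ m, g (1, m) ∈ J) (P : MvPolynomial (Fin 2 × ℕ) ℤ)
    (h0 : constantCoeff P = 0)
    (h1 : bind₁ (fun s : Fin 2 × ℕ =>
      if s.1 = 0 then (X s : MvPolynomial (Fin 2 × ℕ) ℤ) else 0) P = 0)
    (h2 : bind₁ (fun s : Fin 2 × ℕ =>
      if s.1 = 1 then (X s : MvPolynomial (Fin 2 × ℕ) ℤ) else 0) P = 0) :
    aeval g P ∈ I * J := by
  rw [← Ideal.Quotient.eq_zero_iff_mem]
  set q : B →+* B ⧸ (I * J) := Ideal.Quotient.mk (I * J) with hq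
  have hcomm : q (aeval g P) = aeval (fun s => q (g s)) P := by
    rw [map_aeval]
    rw [show q.comp (algebraMap ℤ B) = algebraMap ℤ (B ⧸ I * J) from Subsingleton.elim _ _]
    rfl
  have key0 : aeval (fun s : Fin 2 × ℕ => if s.1 = 0 then q (g s) else 0) P = 0 := by
    have h := congrArg (aeval fun s => q (g s)) h1
    rw [map_zero, aeval_bind₁] at h
    have hfun : (fun s : Fin 2 × ℕ => if s.1 = 0 then q (g s) else 0)
        = fun s : Fin 2 × ℕ => aeval (fun s => q (g s))
            (if s.1 = 0 then (X s : MvPolynomial (Fin 2 × ℕ) ℤ) else 0) := by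
      funext s
      by_cases hs : s.1 = 0 <;> simp [hs]
    rw [hfun]
    exact h
  have key1 : aeval (fun s : Fin 2 × ℕ => if s.1 = 1 then q (g s) else 0) P = 0 := by
    have h := congrArg (aeval fun s => q (g s)) h2
    rw [map_zero, aeval_bind₁] at h
    have hfun : (fun s : Fin 2 × ℕ => if s.1 = 1 then q (g s) else 0)
        = fun s : Fin 2 × ℕ => aeval (fun s => q (g s))
            (if s.1 = 1 then (X s : MvPolynomial (Fin 2 × ℕ) ℤ) else 0) := by
      funext s
      by_cases hs : s.1 = 1 <;> simp [hs]
    rw [hfun]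
    exact h
  have hsplit := aeval_split (I.map q) (J.map q) (fun s => q (g s))
    (fun m => Ideal.mem_map_of_mem q (hI m)) (fun m => Ideal.mem_map_of_mem q (hJ m))
    (fun u hu w hw => by
      have hmem : u * w ∈ I.map q * J.map q := Ideal.mul_mem_mul hu hw
      rwa [← Ideal.map_mul, hq, Ideal.map_quotient_self, Ideal.mem_bot] at hmem)
    P
  rw [hcomm]
  erw [hsplit, key0, key1, h0]
  simp

end PolyLemmas

lemma keyAdd0 (n : ℕ) :
    bind₁ (fun s : Fin 2 × ℕ => if s.1 = 0 then (X s : MvPolynomial (Fin 2 × ℕ) ℤ) else 0)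
      (WittVector.wittAdd p n) = X (0, n) := by
  have h := WittVector.add_coeff
    (WittVector.mk p (fun m => (X ((0 : Fin 2), m) : MvPolynomial (Fin 2 × ℕ) ℤ))) 0 n
  rw [add_zero, WittVector.coeff_mk] at h
  have hz : (0 : WittVector p (MvPolynomial (Fin 2 × ℕ) ℤ)).coeff = fun _ => 0 :=
    funext fun m => WittVector.zero_coeff p _ m
  rw [hz] at h
  have hu : Function.uncurry
      ![fun m => (X ((0 : Fin 2), m) : MvPolynomial (Fin 2 × ℕ) ℤ), fun _ => 0]
      = fun s : Fin 2 × ℕ => if s.1 = 0 then (X s : MvPolynomial (Fin 2 × ℕ) ℤ) else 0 := by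
    funext s
    rcases s with ⟨i, m⟩
    rcases fin2_cases i with rfl | rfl
    · simp [Function.uncurry]
    · simp [Function.uncurry]
  simp only [WittVector.peval, hu] at h
  exact h.symm

lemma keyAdd1 (n : ℕ) :
    bind₁ (fun s : Fin 2 × ℕ => if s.1 = 1 then (X s : MvPolynomial (Fin 2 × ℕ) ℤ) else 0)
      (WittVector.wittAdd p n) = X (1, n) := by
  have h := WittVector.add_coeff (0 : WittVector p (MvPolynomial (Fin 2 × ℕ) ℤ))
    (WittVector.mk p (fun m => (X ((1 : Fin 2), m) : MvPolynomial (Fin 2 × ℕ) ℤ))) n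
  rw [zero_add, WittVector.coeff_mk] at h
  have hz : (0 : WittVector p (MvPolynomial (Fin 2 × ℕ) ℤ)).coeff = fun _ => 0 :=
    funext fun m => WittVector.zero_coeff p _ m
  rw [hz] at h
  have hu : Function.uncurry
      ![(fun _ => 0 : ℕ → MvPolynomial (Fin 2 × ℕ) ℤ),
        fun m => (X ((1 : Fin 2), m) : MvPolynomial (Fin 2 × ℕ) ℤ)]
      = fun s : Fin 2 × ℕ => if s.1 = 1 then (X s : MvPolynomial (Fin 2 × ℕ) ℤ) else 0 := by
    funext s
    rcases s with ⟨i, m⟩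
    rcases fin2_cases i with rfl | rfl
    · simp [Function.uncurry]
    · simp [Function.uncurry]
  simp only [WittVector.peval, hu] at h
  exact h.symm

lemma add_coeff_sub_mem {A : Type*} [CommRing A] (I J : Ideal A) (x y : WittVector p A)
    (hx : ∀ m, x.coeff m ∈ I) (hy : ∀ m, y.coeff m ∈ J) (n : ℕ) :
    (x + y).coeff n - x.coeff n - y.coeff n ∈ I * J := by
  set g := fun s : Fin 2 × ℕ => if s.1 = 0 then x.coeff s.2 else y.coeff s.2 with hgdef
  have hg : Function.uncurry ![x.coeff, y.coeff] = g := by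
    funext s
    rcases s with ⟨i, m⟩
    rcases fin2_cases i with rfl | rfl
    · simp [Function.uncurry, hgdef]
    · simp [Function.uncurry, hgdef]
  have hrw : (x + y).coeff n - x.coeff n - y.coeff n
      = aeval g (WittVector.wittAdd p n - X (0, n) - X (1, n)) := by
    rw [WittVector.add_coeff]
    simp only [WittVector.peval, hg, map_sub, aeval_X]
    simp [hgdef]
  rw [hrw]
  apply aeval_mem_mul I J g (fun m => by simpa [hgdef] using hx m)
    (fun m => by simpa [hgdef, if_neg (show (1 : Fin 2) ≠ 0 by decide)] using hy m)
  · rw [map_sub, map_sub, WittVector.constantCoeff_wittAdd, constantCoeff_X, constantCoeff_X]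
    ring
  · rw [map_sub, map_sub, keyAdd0, bind₁_X_right, bind₁_X_right]
    simp
  · rw [map_sub, map_sub, keyAdd1, bind₁_X_right, bind₁_X_right]
    simp

lemma key_inv (B : Type*) [CommRing B] [Invertible (p : B)] (T : B) (z : WittVector p B) :
    WittVector.teichmuller p T * z = WittVector.mk p fun m => T ^ p ^ m * z.coeff m := by
  apply (WittVector.ghostMap.bijective_of_invertible p B).1
  funext m
  rw [map_mul]
  simp only [Pi.mul_apply, WittVector.ghostMap_apply]
  rw [WittVector.ghostComponent_teichmuller, WittVector.ghostComponent_apply,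
    WittVector.ghostComponent_apply, WittVector.coeff_mk, aeval_wittPolynomial,
    aeval_wittPolynomial,
    Finset.mul_sum (Finset.range (m + 1)) (fun i => (p : B) ^ i * z.coeff i ^ p ^ (m - i))
      (T ^ p ^ m)]
  refine Finset.sum_congr rfl fun i hi => ?_
  rw [Finset.mem_range] at hi
  have hpow : p ^ i * p ^ (m - i) = p ^ m := by
    rw [← pow_add]
    congr 1
    omega
  rw [mul_pow, ← pow_mul, hpow]
  ring

lemma keyZ (n : ℕ) :
    WittVector.teichmuller p (X ((0 : Fin 2), 0) : MvPolynomial (Fin 2 × ℕ) ℤ) *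
      WittVector.mk p (fun m => X (1, m)) =
      WittVector.mk p (fun m => X (0, 0) ^ p ^ m * X (1, m)) := by
  apply WittVector.map_injective (MvPolynomial.map (Int.castRingHom ℚ))
    (MvPolynomial.map_injective _ Int.cast_injective)
  have hmk : ∀ f : ℕ → MvPolynomial (Fin 2 × ℕ) ℤ,
      WittVector.map (MvPolynomial.map (Int.castRingHom ℚ)) (WittVector.mk p f)
        = WittVector.mk p fun m => MvPolynomial.map (Int.castRingHom ℚ) (f m) := by
    intro f
    apply WittVector.ext
    intro m
    rw [WittVector.map_coeff, WittVector.coeff_mk, WittVector.coeff_mk]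
  have hres : (fun m => MvPolynomial.map (Int.castRingHom ℚ) (X ((1 : Fin 2), m)))
      = fun m => (X ((1 : Fin 2), m) : MvPolynomial (Fin 2 × ℕ) ℚ) := by
    funext m
    rw [map_X]
  rw [map_mul, WittVector.map_teichmuller, hmk, hmk, map_X, hres, key_inv]
  apply WittVector.ext
  intro m
  rw [WittVector.coeff_mk, WittVector.coeff_mk, WittVector.coeff_mk]
  simp

lemma teichmuller_mul_coeff {A : Type*} [CommRing A] (t : A) (x : WittVector p A) (n : ℕ) :
    (WittVector.teichmuller p t * x).coeff n = t ^ p ^ n * x.coeff n := by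
  let v : Fin 2 × ℕ → A := fun s => if s.1 = 0 then t else x.coeff s.2
  let ψ : MvPolynomial (Fin 2 × ℕ) ℤ →+* A := (MvPolynomial.aeval v).toRingHom
  have h2 := congrArg (WittVector.map ψ) (keyZ (p := p) n)
  rw [map_mul, WittVector.map_teichmuller] at h2
  have hψ0 : ψ (X ((0 : Fin 2), 0)) = t := by simp [ψ, v]
  have hZx : WittVector.map ψ (WittVector.mk p fun m => X (1, m)) = x := by
    apply WittVector.ext
    intro m
    rw [WittVector.map_coeff, WittVector.coeff_mk]
    simp [ψ, v, if_neg (show (1 : Fin 2) ≠ 0 by decide)]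
  rw [hψ0, hZx] at h2
  rw [h2, WittVector.map_coeff, WittVector.coeff_mk]
  simp [ψ, v, if_neg (show (1 : Fin 2) ≠ 0 by decide)]

lemma isNilpotent_span_finset {A : Type*} [CommRing A] (s : Finset A)
    (hs : ∀ x ∈ s, IsNilpotent x) : IsNilpotent (Ideal.span (s : Set A)) := by
  classical
  induction s using Finset.induction_on with
  | empty => exact ⟨1, by simp⟩
  | @insert x s hx ih =>
      rw [Finset.coe_insert, Ideal.span_insert]
      obtain ⟨k, hk⟩ := hs x (Finset.mem_insert_self x s)
      have h1 : IsNilpotent (Ideal.span {x}) := by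
        refine ⟨k, ?_⟩
        rw [Ideal.span_singleton_pow, hk, Ideal.zero_eq_bot]
        exact Ideal.span_singleton_eq_bot.mpr rfl
      have h2 : IsNilpotent (Ideal.span (s : Set A)) :=
        ih fun y hy => hs y (Finset.mem_insert_of_mem hy)
      have h3 := Commute.isNilpotent_add (Commute.all _ _) h1 h2
      rwa [Submodule.add_eq_sup] at h3

end Stmt8Aux

/-- Assume `p > 2`, `v(p) ≥ (p-1)·v(μ) > 0`, `v(μ) ≥ v(λ) > 0`, and
`c₀·μ^{p-1} = p`. In `𝕎(A)` with `A = R/λR` and `c` the image of `c₀`: if `a^p = 0`,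
`b ∈ Ŵ(A)` with `F(b) = 0`, and `[c]·b + V(b) = [a]`, then `b = 0` and `a = 0`. -/
theorem stmt_8 (p : ℕ) [Fact p.Prime] (hp2 : 2 < p)
    (R : Type*) [CommRing R] [IsDomain R] [IsDiscreteValuationRing R] [CharZero R]
    [CharP (IsLocalRing.ResidueField R) p]
    (v : R → ℕ∞) (π : R) (hπ : Irreducible π) (hv0 : v 0 = ⊤)
    (hv : ∀ x : R, x ≠ 0 → ∃ n : ℕ, v x = n ∧ π ^ n ∣ x ∧ ¬ π ^ (n + 1) ∣ x)
    (μ lam : R) (hμ0 : μ ≠ 0) (hlam0 : lam ≠ 0)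
    (h1 : ((p - 1 : ℕ) : ℕ∞) * v μ ≤ v (p : R)) (h2 : 0 < ((p - 1 : ℕ) : ℕ∞) * v μ)
    (h3 : v lam ≤ v μ) (h4 : 0 < v lam)
    (c₀ : R) (hc₀ : c₀ * μ ^ (p - 1) = (p : R))
    (a : R ⧸ Ideal.span {lam}) (ha : a ^ p = 0)
    (b : WittVector p (R ⧸ Ideal.span {lam}))
    (hbNil : ∀ n, IsNilpotent (b.coeff n)) (hbFin : ∃ N, ∀ n, N ≤ n → b.coeff n = 0)
    (hbF : WittVector.frobenius b = 0)
    (heq : WittVector.teichmuller p (Ideal.Quotient.mk (Ideal.span {lam}) c₀) * b +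
        WittVector.verschiebung b = WittVector.teichmuller p a) :
    b = 0 ∧ a = 0 := by
  classical
  set c' : R ⧸ Ideal.span {lam} := Ideal.Quotient.mk (Ideal.span {lam}) c₀ with hc'
  obtain ⟨N, hN⟩ := hbFin
  set I : Ideal (R ⧸ Ideal.span {lam}) := Ideal.span ({a} ∪ Set.range b.coeff) with hIdef
  have hbI : ∀ n, b.coeff n ∈ I := fun n => Ideal.subset_span (Or.inr ⟨n, rfl⟩)
  have haI : a ∈ I := Ideal.subset_span (Or.inl rfl)
  -- `I` is nilpotent
  have hnil : ∃ M, I ^ M = ⊥ := by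
    have hfin : ({a} ∪ b.coeff '' Set.Iio N : Set (R ⧸ Ideal.span {lam})).Finite :=
      (Set.finite_singleton a).union ((Set.finite_Iio N).image _)
    have h1' : IsNilpotent (Ideal.span ((hfin.toFinset : Finset (R ⧸ Ideal.span {lam})) : Set (R ⧸ Ideal.span {lam}))) := by
      apply Stmt8Aux.isNilpotent_span_finset
      intro x hx
      rw [Set.Finite.mem_toFinset] at hx
      rcases hx with hx | ⟨m, _, hxe⟩
      · rw [Set.mem_singleton_iff] at hx
        rw [hx]
        exact ⟨p, ha⟩
      · rw [← hxe]
        exact hbNil m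
    rw [Set.Finite.coe_toFinset] at h1'
    obtain ⟨M, hM⟩ := h1'
    refine ⟨M, le_bot_iff.mp ?_⟩
    have hle : I ≤ Ideal.span ({a} ∪ b.coeff '' Set.Iio N) := by
      rw [hIdef]
      apply Ideal.span_le.mpr
      rintro x (hx | ⟨m, rfl⟩)
      · exact Ideal.subset_span (Or.inl hx)
      · by_cases hm : m < N
        · exact Ideal.subset_span (Or.inr ⟨m, hm, rfl⟩)
        · rw [hN m (le_of_not_gt hm)]
          exact (Ideal.span _).zero_mem
    calc I ^ M ≤ (Ideal.span ({a} ∪ b.coeff '' Set.Iio N)) ^ M := Ideal.pow_right_mono hle M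
      _ = ⊥ := by rw [← Ideal.zero_eq_bot, hM]
  -- bootstrap
  have step : ∀ k, 1 ≤ k → (∀ n, b.coeff n ∈ I ^ k) → ∀ n, b.coeff n ∈ I ^ (k + 1) := by
    intro k hk hmem
    have hxc : ∀ m, (WittVector.teichmuller p c' * b).coeff m ∈ I ^ k := fun m => by
      rw [Stmt8Aux.teichmuller_mul_coeff]
      exact Ideal.mul_mem_left _ _ (hmem m)
    have hyc : ∀ m, (WittVector.verschiebung b : WittVector p (R ⧸ Ideal.span {lam})).coeff m ∈ I ^ k := by
      intro m
      cases m with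
      | zero =>
          rw [WittVector.verschiebung_coeff_zero]
          exact zero_mem _
      | succ m =>
          rw [WittVector.verschiebung_coeff_succ]
          exact hmem m
    have hrec : ∀ n, b.coeff n + c' ^ p ^ (n + 1) * b.coeff (n + 1) ∈ I ^ (k + 1) := by
      intro n
      have hε := Stmt8Aux.add_coeff_sub_mem (I ^ k) (I ^ k)
        (WittVector.teichmuller p c' * b) (WittVector.verschiebung b) hxc hyc (n + 1)
      rw [heq, WittVector.teichmuller_coeff_pos p a (n + 1) (Nat.succ_pos n),
        Stmt8Aux.teichmuller_mul_coeff, WittVector.verschiebung_coeff_succ] at hε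
      have h2' : I ^ k * I ^ k ≤ I ^ (k + 1) := by
        rw [← pow_add]
        exact Ideal.pow_le_pow_right (by omega)
      have h3' := h2' hε
      have h4' : b.coeff n + c' ^ p ^ (n + 1) * b.coeff (n + 1)
          = -(0 - c' ^ p ^ (n + 1) * b.coeff (n + 1) - b.coeff n) := by ring
      rw [h4']
      exact neg_mem h3'
    have hdown : ∀ d n, N ≤ n + d → b.coeff n ∈ I ^ (k + 1) := by
      intro d
      induction d with
      | zero =>
          intro n hn
          rw [hN n (by omega)]
          exact zero_mem _
      | succ d ih =>
          intro n hn
          have hnext : b.coeff (n + 1) ∈ I ^ (k + 1) := ih (n + 1) (by omega)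
          have hsub := sub_mem (hrec n) (Ideal.mul_mem_left _ (c' ^ p ^ (n + 1)) hnext)
          simpa using hsub
    exact fun n => hdown N n (by omega)
  have hall : ∀ k n, b.coeff n ∈ I ^ (k + 1) := by
    intro k
    induction k with
    | zero => intro n; simpa [pow_one] using hbI n
    | succ k ih => exact step (k + 1) (by omega) ih
  obtain ⟨M, hM⟩ := hnil
  have hb0 : b = 0 := by
    apply WittVector.ext
    intro n
    have hmem := hall M n
    have hM1 : I ^ (M + 1) = ⊥ := by rw [pow_succ, hM]; simp
    rw [hM1, Ideal.mem_bot] at hmem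
    rw [hmem, WittVector.zero_coeff]
  have ha0 : a = 0 := by
    rw [hb0, mul_zero, map_zero, add_zero] at heq
    have hco := congrArg (fun w : WittVector p (R ⧸ Ideal.span {lam}) => w.coeff 0) heq
    simpa [WittVector.teichmuller_coeff_zero, WittVector.zero_coeff] using hco.symm
  exact ⟨hb0, ha0⟩
end

section
/- Let A be a commutative ring, c ∈ A, and b ∈ 𝕎(A). Then for every n ≥ 0, the n-th coefficient of the product [c]·b equals c^{p^n} · (n-th coefficient of b). -/
open WittVector Finset

private lemma aux_inv (p : ℕ) [Fact p.Prime] (R : Type*) [CommRing R] [Invertible (p : R)]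
    (c : R) (b : WittVector p R) (n : ℕ) :
    (WittVector.teichmuller p c * b).coeff n = c ^ p ^ n * b.coeff n := by
  have key : WittVector.teichmuller p c * b
      = WittVector.mk p (fun n => c ^ p ^ n * b.coeff n) := by
    apply (WittVector.ghostMap.bijective_of_invertible p R).injective
    funext m
    have : (WittVector.ghostMap (WittVector.teichmuller p c * b) : ℕ → R) m
        = WittVector.ghostComponent m (WittVector.teichmuller p c)
          * WittVector.ghostComponent m b := by
      rw [map_mul]; rfl
    rw [this, WittVector.ghostComponent_teichmuller]
    show _ = WittVector.ghostComponent m _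
    rw [WittVector.ghostComponent_apply, WittVector.ghostComponent_apply,
      aeval_wittPolynomial, aeval_wittPolynomial, Finset.mul_sum]
    apply Finset.sum_congr rfl
    intro i hi
    rw [Finset.mem_range] at hi
    have hile : i ≤ m := Nat.lt_succ_iff.mp hi
    rw [WittVector.coeff_mk]
    ring_nf
    rw [← pow_add, Nat.add_sub_cancel' hile]
  rw [key, WittVector.coeff_mk]

private lemma aux_poly (p : ℕ) [Fact p.Prime] (n : ℕ) :
    (WittVector.teichmuller p (MvPolynomial.X none : MvPolynomial (Option ℕ) ℤ)
      * WittVector.mk p (fun i => MvPolynomial.X (some i))).coeff n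
    = (MvPolynomial.X none : MvPolynomial (Option ℕ) ℤ) ^ p ^ n
      * (WittVector.mk p (fun i => MvPolynomial.X (some i))).coeff n := by
  have hinj : Function.Injective
      (MvPolynomial.map (Int.castRingHom ℚ) : MvPolynomial (Option ℕ) ℤ →+* _) :=
    MvPolynomial.map_injective _ (fun a b h => by simpa using h)
  letI : Invertible (p : ℚ) :=
    invertibleOfNonzero (by exact_mod_cast (Fact.out : p.Prime).ne_zero)
  letI : Invertible (p : MvPolynomial (Option ℕ) ℚ) := by
    have := Invertible.map (algebraMap ℚ (MvPolynomial (Option ℕ) ℚ)) (p : ℚ)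
    simpa using this
  apply hinj
  rw [← WittVector.map_coeff, RingHom.map_mul, WittVector.map_teichmuller, aux_inv,
    WittVector.map_coeff, map_mul, map_pow]

/-- For a commutative ring `A`, `c ∈ A` and `b ∈ 𝕎(A)`, the `n`-th coefficient
of `[c]·b` equals `c^(p^n) · b_n`. -/
theorem stmt_9 (p : ℕ) [Fact p.Prime] (A : Type*) [CommRing A] (c : A)
    (b : WittVector p A) (n : ℕ) :
    (WittVector.teichmuller p c * b).coeff n = c ^ p ^ n * b.coeff n := by
  classical
  let f : MvPolynomial (Option ℕ) ℤ →+* A :=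
    MvPolynomial.eval₂Hom (Int.castRingHom A) (fun o => o.elim c b.coeff)
  have hb : WittVector.map f (WittVector.mk p fun i => MvPolynomial.X (some i)) = b := by
    ext m
    rw [WittVector.map_coeff]
    simp [f, WittVector.coeff_mk]
  have h := congrArg f (aux_poly p n)
  rw [← WittVector.map_coeff, RingHom.map_mul, WittVector.map_teichmuller, hb,
    map_mul, map_pow, ← WittVector.map_coeff, hb] at h
  simpa [f] using h
end

section
/- Assume p > 2 and that R contains a primitive p²-th root of unity ζ; set λ_{(1)} := ζ^p − 1. Let μ, λ ∈ R be nonzero with v(λ_{(1)}) ≥ v(μ) ≥ v(λ), and let c ∈ R be the element with c·μ^{p−1} = p (it exists since v(p) = (p−1)·v(λ_{(1)}) ≥ (p−1)·v(μ)). Then for every a ∈ R the following are equivalent: (1) λ divides a^p and λ^p divides p·a − c·a^p; (2) p·v(a) ≥ max(p·v(λ) + (p−1)·v(μ) − v(p), v(λ)). -/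
open IsDiscreteValuationRing

private lemma natA (p L M A C : ℕ) (hp : 1 ≤ p) (hLM : L ≤ M) (h : p*L ≤ C + p*A) :
    p*L ≤ C + ((p-1)*M + A) := by
  obtain ⟨q, rfl⟩ : ∃ q, p = q + 1 := ⟨p - 1, by omega⟩
  have hq : q + 1 - 1 = q := by omega
  rw [hq]
  rcases le_or_gt L A with h' | h'
  · have : q * L ≤ q * M := Nat.mul_le_mul_left q hLM
    nlinarith
  · have e : (q+1)*(L-A) + (q+1)*A = (q+1)*L := by
      rw [← Nat.mul_add]; congr 1; omega
    have hC : (q+1)*(L-A) ≤ C := by omega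
    have : (L - A) ≤ (q+1)*(L-A) := Nat.le_mul_of_pos_left _ (by omega)
    have hLCA : L ≤ C + A := by omega
    have : q * L ≤ q * M := Nat.mul_le_mul_left q hLM
    nlinarith

private lemma natB (x y z C : ℕ) (h : x ≤ C + z) : x + y - (C + y) ≤ z := by omega

private lemma natC (x y z C : ℕ) (h : x + y - (C + y) ≤ z) : x ≤ C + z := by omega

private lemma natD (p A M C : ℕ) (hp : 2 ≤ p) (h : A < M) : C + p*A < C + (p-1)*M + A := by
  obtain ⟨q, rfl⟩ : ∃ q, p = q + 1 := ⟨p - 1, by omega⟩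
  have hq : q + 1 - 1 = q := by omega
  rw [hq]
  have : q*A < q*M := Nat.mul_lt_mul_of_pos_left h (by omega)
  nlinarith

/-- With `p > 2`, `ζ` a primitive `p²`-th root of unity, `λ₁ := ζ^p - 1`,
`μ, λ` nonzero with `v(λ₁) ≥ v(μ) ≥ v(λ)`, and `c·μ^{p-1} = p`: for every `a ∈ R`,
`λ ∣ a^p` and `λ^p ∣ p·a - c·a^p` iff `p·v(a) ≥ max(p·v(λ) + (p-1)·v(μ) - v(p), v(λ))`. -/
theorem stmt_10 (p : ℕ) (hp : p.Prime) (hp2 : 2 < p)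
    (R : Type*) [CommRing R] [IsDomain R] [IsDiscreteValuationRing R] [CharZero R]
    [CharP (IsLocalRing.ResidueField R) p]
    (v : R → ℕ∞) (π : R) (hπ : Irreducible π) (hv0 : v 0 = ⊤)
    (hv : ∀ x : R, x ≠ 0 → ∃ n : ℕ, v x = n ∧ π ^ n ∣ x ∧ ¬ π ^ (n + 1) ∣ x)
    (ζ : R) (hζ : IsPrimitiveRoot ζ (p ^ 2))
    (μ lam : R) (hμ0 : μ ≠ 0) (hlam0 : lam ≠ 0)
    (h1 : v μ ≤ v (ζ ^ p - 1)) (h2 : v lam ≤ v μ)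
    (c : R) (hc : c * μ ^ (p - 1) = (p : R)) :
    ∀ a : R,
      (lam ∣ a ^ p ∧ lam ^ p ∣ ((p : R) * a - c * a ^ p)) ↔
        max ((p : ℕ∞) * v lam + ((p - 1 : ℕ) : ℕ∞) * v μ - v (p : R)) (v lam) ≤
          (p : ℕ∞) * v a := by
  classical
  have hp1 : 1 ≤ p := hp.one_lt.le.trans' (by omega)
  have hp0 : p ≠ 0 := hp.ne_zero
  -- v agrees with addVal on nonzero elements
  have hveq : ∀ x : R, x ≠ 0 → v x = addVal R x := by
    intro x hx
    obtain ⟨n, hn, ⟨y, hy⟩, hnd⟩ := hv x hx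
    have hyu : IsUnit y := by
      by_contra hyu
      apply hnd
      have hy' : y ∈ IsLocalRing.maximalIdeal R := hyu
      rw [hπ.maximalIdeal_eq, Ideal.mem_span_singleton] at hy'
      obtain ⟨z, hz⟩ := hy'
      exact ⟨z, by rw [hy, hz]; ring⟩
    rw [hn, addVal_def x hyu.unit hπ n (by rw [hy, IsUnit.unit_spec]; ring)]
  -- valuation of difference
  have hneg : ∀ y : R, addVal R (-y) = addVal R y := by
    intro y
    have h1 : addVal R (-1 : R) = 0 :=
      addVal_def (-1 : R) (-1 : Rˣ) hπ 0 (by simp)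
    calc addVal R (-y) = addVal R ((-1) * y) := by ring_nf
    _ = addVal R (-1 : R) + addVal R y := addVal_mul
    _ = addVal R y := by rw [h1, zero_add]
  have hsub : ∀ x y : R, addVal R y < addVal R x → addVal R (x - y) = addVal R y := by
    intro x y hxy
    refine le_antisymm ?_ ?_
    · by_contra hlt
      push_neg at hlt
      have e1 : addVal R y = addVal R (x + -(x - y)) := by ring_nf
      have e2 : min (addVal R x) (addVal R (-(x - y))) ≤ addVal R (x + -(x - y)) :=
        addVal_add
      rw [hneg, ← e1] at e2
      exact absurd e2 (not_le.mpr (lt_min hxy hlt))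
    · have e2 : min (addVal R x) (addVal R (-y)) ≤ addVal R (x + -y) := addVal_add
      rw [hneg, ← sub_eq_add_neg] at e2
      exact le_trans (le_min hxy.le le_rfl) e2
  intro a
  have hp0R : (p : R) ≠ 0 := Nat.cast_ne_zero.mpr hp0
  have hc0 : c ≠ 0 := by
    rintro rfl; rw [zero_mul] at hc; exact hp0R hc.symm
  by_cases ha : a = 0
  · subst ha
    simp only [hv0]
    constructor
    · intro _
      have ht : (p : ℕ∞) * ⊤ = ⊤ := WithTop.mul_top (Nat.cast_ne_zero.mpr hp0)
      rw [ht]; exact le_top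
    · intro _
      refine ⟨?_, ?_⟩
      · rw [zero_pow hp0]; exact dvd_zero _
      · rw [zero_pow hp0, mul_zero, mul_zero, sub_zero]; exact dvd_zero _
  -- extract natural valuations
  have getN : ∀ x : R, x ≠ 0 → ∃ n : ℕ, addVal R x = (n : ℕ∞) := by
    intro x hx
    obtain ⟨n, hn⟩ := WithTop.ne_top_iff_exists.mp
      (fun h => hx (addVal_eq_top_iff.mp h))
    exact ⟨n, hn.symm⟩
  obtain ⟨A, hAv⟩ := getN a ha
  obtain ⟨L, hLv⟩ := getN lam hlam0
  obtain ⟨M, hMv⟩ := getN μ hμ0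
  obtain ⟨C, hCv⟩ := getN c hc0
  have hLM : L ≤ M := by
    rw [hveq lam hlam0, hveq μ hμ0, hLv, hMv, Nat.cast_le] at h2
    exact h2
  have hP : addVal R (p : R) = ((C + (p-1)*M : ℕ) : ℕ∞) := by
    rw [← hc, addVal_mul, addVal_pow, hCv, hMv, nsmul_eq_mul]
    simp only [Nat.cast_add, Nat.cast_mul]
  have hap : addVal R (a ^ p) = ((p * A : ℕ) : ℕ∞) := by
    rw [addVal_pow, hAv, nsmul_eq_mul, Nat.cast_mul]
  have hlamp : addVal R (lam ^ p) = ((p * L : ℕ) : ℕ∞) := by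
    rw [addVal_pow, hLv, nsmul_eq_mul, Nat.cast_mul]
  have hpa : addVal R ((p : R) * a) = ((C + (p-1)*M + A : ℕ) : ℕ∞) := by
    rw [addVal_mul, hP, hAv, ← Nat.cast_add]
  have hcap : addVal R (c * a ^ p) = ((C + p * A : ℕ) : ℕ∞) := by
    rw [addVal_mul, hCv, hap, ← Nat.cast_add]
  -- rewrite the RHS
  have eL : ((p : ℕ∞) * v lam + ((p - 1 : ℕ) : ℕ∞) * v μ - v (p : R))
      = ((p * L + (p-1) * M - (C + (p-1)*M) : ℕ) : ℕ∞) := by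
    rw [hveq lam hlam0, hveq μ hμ0, hveq _ hp0R, hLv, hMv, hP,
      ENat.coe_sub (p * L + (p-1) * M) (C + (p-1)*M)]
    simp only [Nat.cast_add, Nat.cast_mul]
  rw [eL, hveq lam hlam0, hveq a ha, hLv, hAv, ← Nat.cast_mul, max_le_iff,
    Nat.cast_le, Nat.cast_le]
  constructor
  · rintro ⟨hd1, hd2⟩
    have hLpA : L ≤ p * A := by
      have := addVal_le_iff_dvd.mpr hd1
      rw [hLv, hap, Nat.cast_le] at this
      exact this
    have hkey : p * L ≤ C + p * A := by
      rcases le_or_gt M A with hMA | hAM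
      · calc p * L ≤ p * M := Nat.mul_le_mul_left p hLM
        _ ≤ p * A := Nat.mul_le_mul_left p hMA
        _ ≤ C + p * A := Nat.le_add_left _ _
      · have hdiff : addVal R ((p : R) * a - c * a ^ p) = ((C + p * A : ℕ) : ℕ∞) := by
          rw [hsub _ _ (by rw [hpa, hcap, Nat.cast_lt]; exact natD p A M C hp2.le hAM), hcap]
        have := addVal_le_iff_dvd.mpr hd2
        rw [hlamp, hdiff, Nat.cast_le] at this
        exact this
    exact ⟨natB _ _ _ _ hkey, hLpA⟩
  · rintro ⟨hx, hy⟩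
    have hkey : p * L ≤ C + p * A := natC _ _ _ _ hx
    refine ⟨addVal_le_iff_dvd.mp (by rw [hLv, hap, Nat.cast_le]; exact hy), ?_⟩
    have d1 : lam ^ p ∣ (p : R) * a := by
      apply addVal_le_iff_dvd.mp
      rw [hlamp, hpa, Nat.cast_le, add_assoc]
      exact natA p L M A C hp1 hLM hkey
    have d2 : lam ^ p ∣ c * a ^ p := by
      apply addVal_le_iff_dvd.mp
      rw [hlamp, hcap, Nat.cast_le]
      exact hkey
    exact dvd_sub d1 d2
end

section
/- Assume p > 2 and that R contains a primitive p²-th root of unity ζ; set λ_{(1)} := ζ^p − 1. Let μ, λ ∈ R be nonzero with v(λ_{(1)}) ≥ v(μ) ≥ v(λ), and let c ∈ R be the element with c·μ^{p−1} = p. Then the implication 'for all a ∈ R: if λ divides a^p and λ^p divides p·a − c·a^p, then λ divides a' holds if and only if v(λ) ≤ 1 or v(p) − (p−1)·v(μ) < p. -/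
section aux

set_option linter.unusedSectionVars false
set_option linter.unusedVariables false

variable {R : Type*} [CommRing R] [IsDomain R] [IsDiscreteValuationRing R]
  {v : R → ℕ∞} {π : R}

theorem aux_val_unique (hπ : Irreducible π)
    (hv : ∀ x : R, x ≠ 0 → ∃ n : ℕ, v x = n ∧ π ^ n ∣ x ∧ ¬ π ^ (n + 1) ∣ x)
    {x : R} (hx : x ≠ 0) {m : ℕ} (h1 : π ^ m ∣ x) (h2 : ¬ π ^ (m + 1) ∣ x) :
    v x = m := by
  obtain ⟨n, hn, hn1, hn2⟩ := hv x hx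
  have hmn : m = n := by
    by_contra hne
    rcases Nat.lt_or_ge m n with h | h
    · exact h2 (dvd_trans (pow_dvd_pow π (by omega)) hn1)
    · exact hn2 (dvd_trans (pow_dvd_pow π (by omega)) h1)
  rw [hn, hmn]

theorem aux_assoc_val (hπ : Irreducible π)
    (hv : ∀ x : R, x ≠ 0 → ∃ n : ℕ, v x = n ∧ π ^ n ∣ x ∧ ¬ π ^ (n + 1) ∣ x)
    {x : R} {m : ℕ} (h : Associated x (π ^ m)) : v x = m := by
  have hx : x ≠ 0 := by
    intro h0
    rw [h0] at h
    exact pow_ne_zero m hπ.ne_zero ((associated_zero_iff_eq_zero _).mp h.symm)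
  refine aux_val_unique hπ hv hx h.symm.dvd (fun hdvd => ?_)
  have : π ^ (m + 1) ∣ π ^ m := dvd_trans hdvd h.dvd
  rw [pow_dvd_pow_iff hπ.ne_zero hπ.not_isUnit] at this
  omega

theorem aux_val_assoc (hπ : Irreducible π)
    (hv : ∀ x : R, x ≠ 0 → ∃ n : ℕ, v x = n ∧ π ^ n ∣ x ∧ ¬ π ^ (n + 1) ∣ x)
    {x : R} (hx : x ≠ 0) {m : ℕ} (h : v x = m) : Associated x (π ^ m) := by
  obtain ⟨n, hn, hn1, hn2⟩ := hv x hx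
  obtain ⟨k, hk⟩ := IsDiscreteValuationRing.associated_pow_irreducible hx hπ
  have hmn : m = n := by rw [h] at hn; exact_mod_cast hn
  have h1 : π ^ n ∣ π ^ k := dvd_trans hn1 hk.dvd
  have h2 : ¬ π ^ (n + 1) ∣ π ^ k := fun hd => hn2 (dvd_trans hd hk.symm.dvd)
  rw [pow_dvd_pow_iff hπ.ne_zero hπ.not_isUnit] at h1 h2
  have : k = n := by omega
  rw [hmn, ← this]
  exact hk

theorem aux_dvd_iff (hπ : Irreducible π)
    (hv : ∀ x : R, x ≠ 0 → ∃ n : ℕ, v x = n ∧ π ^ n ∣ x ∧ ¬ π ^ (n + 1) ∣ x)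
    {x y : R} (hx : x ≠ 0) (hy : y ≠ 0) {m n : ℕ} (hm : v x = m) (hn : v y = n) :
    x ∣ y ↔ m ≤ n := by
  rw [(aux_val_assoc hπ hv hx hm).dvd_iff_dvd_left,
    (aux_val_assoc hπ hv hy hn).dvd_iff_dvd_right,
    pow_dvd_pow_iff hπ.ne_zero hπ.not_isUnit]

theorem aux_val_mul (hπ : Irreducible π)
    (hv : ∀ x : R, x ≠ 0 → ∃ n : ℕ, v x = n ∧ π ^ n ∣ x ∧ ¬ π ^ (n + 1) ∣ x)
    {x y : R} (hx : x ≠ 0) (hy : y ≠ 0) {m n : ℕ} (hm : v x = m) (hn : v y = n) :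
    v (x * y) = ((m + n : ℕ) : ℕ∞) := by
  refine aux_assoc_val hπ hv ?_
  rw [pow_add]
  exact (aux_val_assoc hπ hv hx hm).mul_mul (aux_val_assoc hπ hv hy hn)

theorem aux_val_pow (hπ : Irreducible π)
    (hv : ∀ x : R, x ≠ 0 → ∃ n : ℕ, v x = n ∧ π ^ n ∣ x ∧ ¬ π ^ (n + 1) ∣ x)
    {x : R} (hx : x ≠ 0) {m : ℕ} (hm : v x = m) (k : ℕ) :
    v (x ^ k) = ((k * m : ℕ) : ℕ∞) := by
  refine aux_assoc_val hπ hv ?_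
  rw [mul_comm, pow_mul]
  exact (aux_val_assoc hπ hv hx hm).pow_pow

theorem aux_val_neg (hπ : Irreducible π)
    (hv : ∀ x : R, x ≠ 0 → ∃ n : ℕ, v x = n ∧ π ^ n ∣ x ∧ ¬ π ^ (n + 1) ∣ x)
    {x : R} (hx : x ≠ 0) {m : ℕ} (hm : v x = m) : v (-x) = m := by
  refine aux_assoc_val hπ hv (Associated.trans ?_ (aux_val_assoc hπ hv hx hm))
  exact ⟨-1, by simp⟩

theorem aux_val_add (hπ : Irreducible π)
    (hv : ∀ x : R, x ≠ 0 → ∃ n : ℕ, v x = n ∧ π ^ n ∣ x ∧ ¬ π ^ (n + 1) ∣ x)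
    {x y : R} (hx : x ≠ 0) (hy : y ≠ 0) {m n : ℕ} (hm : v x = m) (hn : v y = n)
    (hlt : m < n) : x + y ≠ 0 ∧ v (x + y) = m := by
  have hax := aux_val_assoc hπ hv hx hm
  have hay := aux_val_assoc hπ hv hy hn
  have hne : x + y ≠ 0 := by
    intro h0
    have hxy : x = -y := by linear_combination h0
    have hvx : v x = n := by rw [hxy]; exact aux_val_neg hπ hv hy hn
    rw [hm] at hvx
    have : m = n := by exact_mod_cast hvx
    omega
  refine ⟨hne, aux_val_unique hπ hv hne ?_ ?_⟩
  · exact dvd_add hax.symm.dvd (dvd_trans (pow_dvd_pow π hlt.le) hay.symm.dvd)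
  · intro hd
    have hyd : π ^ (m + 1) ∣ y := dvd_trans (pow_dvd_pow π (by omega)) hay.symm.dvd
    have hxd : π ^ (m + 1) ∣ x := by
      have := dvd_sub hd hyd
      simpa using this
    have := dvd_trans hxd hax.dvd
    rw [pow_dvd_pow_iff hπ.ne_zero hπ.not_isUnit] at this
    omega

end aux

/-- With `p > 2`, `ζ` a primitive `p²`-th root of unity, `λ₁ := ζ^p - 1`,
`μ, λ` nonzero with `v(λ₁) ≥ v(μ) ≥ v(λ)`, and `c·μ^{p-1} = p`: the implication
"for all `a`: `λ ∣ a^p` and `λ^p ∣ p·a - c·a^p` imply `λ ∣ a`" holds iff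
`v(λ) ≤ 1` or `v(p) - (p-1)·v(μ) < p`. -/
theorem stmt_11 (p : ℕ) (hp : p.Prime) (hp2 : 2 < p)
    (R : Type*) [CommRing R] [IsDomain R] [IsDiscreteValuationRing R] [CharZero R]
    [CharP (IsLocalRing.ResidueField R) p]
    (v : R → ℕ∞) (π : R) (hπ : Irreducible π) (hv0 : v 0 = ⊤)
    (hv : ∀ x : R, x ≠ 0 → ∃ n : ℕ, v x = n ∧ π ^ n ∣ x ∧ ¬ π ^ (n + 1) ∣ x)
    (ζ : R) (hζ : IsPrimitiveRoot ζ (p ^ 2))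
    (μ lam : R) (hμ0 : μ ≠ 0) (hlam0 : lam ≠ 0)
    (h1 : v μ ≤ v (ζ ^ p - 1)) (h2 : v lam ≤ v μ)
    (c : R) (hc : c * μ ^ (p - 1) = (p : R)) :
    (∀ a : R, lam ∣ a ^ p ∧ lam ^ p ∣ ((p : R) * a - c * a ^ p) → lam ∣ a) ↔
      (v lam ≤ 1 ∨ v (p : R) - ((p - 1 : ℕ) : ℕ∞) * v μ < (p : ℕ∞)) := by
  have hp0 : (p : R) ≠ 0 := Nat.cast_ne_zero.mpr hp.pos.ne'
  have hc0 : c ≠ 0 := by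
    intro h0; rw [h0, zero_mul] at hc; exact hp0 hc.symm
  obtain ⟨e, he, -, -⟩ := hv _ hp0
  obtain ⟨t, ht, -, -⟩ := hv _ hμ0
  obtain ⟨m, hm, -, -⟩ := hv _ hlam0
  obtain ⟨vc, hvc, -, -⟩ := hv _ hc0
  have hmt : m ≤ t := by
    rw [hm, ht] at h2; exact_mod_cast h2
  have hkey : e = vc + (p - 1) * t := by
    have := aux_val_mul hπ hv hc0 (pow_ne_zero _ hμ0) hvc
      (aux_val_pow hπ hv hμ0 ht (p - 1))
    rw [hc, he] at this
    exact_mod_cast this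
  have hsub : v (p : R) - ((p - 1 : ℕ) : ℕ∞) * v μ = (vc : ℕ∞) := by
    rw [he, ht, ← Nat.cast_mul, ← ENat.coe_sub]
    congr 1
    omega
  have hRHS : (v lam ≤ 1 ∨ v (p : R) - ((p - 1 : ℕ) : ℕ∞) * v μ < (p : ℕ∞)) ↔
      (m ≤ 1 ∨ vc < p) := by
    rw [hsub, hm]
    constructor
    · rintro (h | h)
      · left; exact_mod_cast h
      · right; exact_mod_cast h
    · rintro (h | h)
      · left; exact_mod_cast h
      · right; exact_mod_cast h
  rw [hRHS]
  constructor
  · -- forward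
    intro H
    by_contra hR
    push_neg at hR
    obtain ⟨hm2, hvcp⟩ := hR
    have hm2' : 2 ≤ m := hm2
    obtain ⟨m', hm'⟩ : ∃ m', m = m' + 1 := ⟨m - 1, by omega⟩
    have hm1 : 1 ≤ m' := by omega
    set a : R := π ^ m' with ha_def
    have ha0 : a ≠ 0 := pow_ne_zero _ hπ.ne_zero
    have hva : v a = (m' : ℕ∞) := aux_assoc_val hπ hv (Associated.refl _)
    have hva_p : v (a ^ p) = ((p * m' : ℕ) : ℕ∞) := aux_val_pow hπ hv ha0 hva p
    have H1 : lam ∣ a ^ p := by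
      rw [aux_dvd_iff hπ hv hlam0 (pow_ne_zero _ ha0) hm hva_p, hm']
      nlinarith
    have H2 : lam ^ p ∣ ((p : R) * a - c * a ^ p) := by
      have hvlamp : v (lam ^ p) = ((p * m : ℕ) : ℕ∞) := aux_val_pow hπ hv hlam0 hm p
      have hpa : v ((p : R) * a) = ((e + m' : ℕ) : ℕ∞) :=
        aux_val_mul hπ hv hp0 ha0 he hva
      have hca : v (c * a ^ p) = ((vc + p * m' : ℕ) : ℕ∞) :=
        aux_val_mul hπ hv hc0 (pow_ne_zero _ ha0) hvc hva_p
      have htm : (p - 1) * m ≤ (p - 1) * t := Nat.mul_le_mul_left _ hmt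
      have hpm1 : (p - 1) * m = p * m - 1 * m := Nat.sub_mul p 1 m
      have hpm2 : m ≤ p * m := Nat.le_mul_of_pos_left m hp.pos
      refine dvd_sub ?_ ?_
      · rw [aux_dvd_iff hπ hv (pow_ne_zero _ hlam0) (mul_ne_zero hp0 ha0) hvlamp hpa]
        omega
      · rw [aux_dvd_iff hπ hv (pow_ne_zero _ hlam0)
          (mul_ne_zero hc0 (pow_ne_zero _ ha0)) hvlamp hca]
        have : p * m' + p = p * m := by rw [hm']; ring
        omega
    have := H a ⟨H1, H2⟩
    rw [aux_dvd_iff hπ hv hlam0 ha0 hm hva] at this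
    omega
  · -- reverse
    rintro hR a ⟨ha1, ha2⟩
    by_cases ha0 : a = 0
    · simp [ha0]
    obtain ⟨α, hα, -, -⟩ := hv a ha0
    rw [aux_dvd_iff hπ hv hlam0 ha0 hm hα]
    by_contra hαm
    push_neg at hαm
    have hva_p : v (a ^ p) = ((p * α : ℕ) : ℕ∞) := aux_val_pow hπ hv ha0 hα p
    have hdvd1 : m ≤ p * α := by
      rw [aux_dvd_iff hπ hv hlam0 (pow_ne_zero _ ha0) hm hva_p] at ha1
      exact ha1
    rcases hR with h | h
    · have hα0 : α = 0 := by omega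
      rw [hα0, Nat.mul_zero] at hdvd1
      omega
    · -- vc < p
      have hpa0 : (p : R) * a ≠ 0 := mul_ne_zero hp0 ha0
      have hca0 : c * a ^ p ≠ 0 := mul_ne_zero hc0 (pow_ne_zero _ ha0)
      have hpa : v ((p : R) * a) = ((e + α : ℕ) : ℕ∞) := aux_val_mul hπ hv hp0 ha0 he hα
      have hca : v (c * a ^ p) = ((vc + p * α : ℕ) : ℕ∞) :=
        aux_val_mul hπ hv hc0 (pow_ne_zero _ ha0) hvc hva_p
      have hmul : p * (α + 1) ≤ p * m := Nat.mul_le_mul_left _ (by omega)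
      have hcapm : vc + p * α < p * m := by
        have : p * (α + 1) = p * α + p := by ring
        omega
      have hvlamp : v (lam ^ p) = ((p * m : ℕ) : ℕ∞) := aux_val_pow hπ hv hlam0 hm p
      rcases Nat.lt_trichotomy (e + α) (vc + p * α) with hlt | heq | hgt
      · have hnca : v (-(c * a ^ p)) = ((vc + p * α : ℕ) : ℕ∞) :=
          aux_val_neg hπ hv hca0 hca
        have hadd := aux_val_add hπ hv hpa0 (neg_ne_zero.mpr hca0) hpa hnca hlt
        rw [show (p : R) * a + -(c * a ^ p) = (p : R) * a - c * a ^ p by ring] at hadd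
        obtain ⟨hd0, hvd⟩ := hadd
        rw [aux_dvd_iff hπ hv (pow_ne_zero _ hlam0) hd0 hvlamp hvd] at ha2
        omega
      · have hq1 : (p - 1) * α = p * α - 1 * α := Nat.sub_mul p 1 α
        have hq2 : α ≤ p * α := Nat.le_mul_of_pos_left α hp.pos
        have hteq : (p - 1) * t = (p - 1) * α := by omega
        have : t = α := Nat.eq_of_mul_eq_mul_left (by omega) hteq
        omega
      · have hnpa : v (-((p : R) * a)) = ((e + α : ℕ) : ℕ∞) :=
          aux_val_neg hπ hv hpa0 hpa
        have hadd := aux_val_add hπ hv hca0 (neg_ne_zero.mpr hpa0) hca hnpa hgt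
        obtain ⟨hd0, hvd⟩ := hadd
        have hd0' : (p : R) * a - c * a ^ p ≠ 0 := by
          intro h0
          exact hd0 (by linear_combination -h0)
        have hvd' : v ((p : R) * a - c * a ^ p) = ((vc + p * α : ℕ) : ℕ∞) := by
          have := aux_val_neg hπ hv hd0 hvd
          rwa [show -(c * a ^ p + -((p : R) * a)) = (p : R) * a - c * a ^ p by ring] at this
        rw [aux_dvd_iff hπ hv (pow_ne_zero _ hlam0) hd0' hvlamp hvd'] at ha2
        omega
end

section
/- Assume p > 2 and that R contains a primitive p²-th root of unity ζ; set λ_{(2)} := ζ − 1 and λ_{(1)} := ζ^p − 1. Let η := Σ_{k=1}^{p−1} (−1)^{k−1}·k^{−1}·λ_{(2)}^k ∈ R (each integer k with 1 ≤ k ≤ p−1 is a unit in R), and let c ∈ R be the element with c·λ_{(1)}^{p−1} = p (it exists since v(p) = (p−1)·v(λ_{(1)})). Then λ_{(1)}^p divides p·η − λ_{(1)} − c·η^p in R. -/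
set_option maxHeartbeats 2000000

lemma aux_unit (p : ℕ) (R : Type*) [CommRing R] [IsLocalRing R]
    [CharP (IsLocalRing.ResidueField R) p] {k : ℕ} (hk : ¬ p ∣ k) : IsUnit (k : R) := by
  rw [← IsLocalRing.notMem_maximalIdeal]
  intro hmem
  have h0 : IsLocalRing.residue R (k : R) = 0 := Ideal.Quotient.eq_zero_iff_mem.2 hmem
  rw [map_natCast] at h0
  exact hk ((CharP.cast_eq_zero_iff _ p k).1 h0)

lemma aux_choose_mod (p : ℕ) (hp : p.Prime) : ∀ j, j ≤ p - 1 →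
    (((p-1).choose j : ℕ) : ZMod p) = (-1)^j := by
  haveI := Fact.mk hp
  intro j
  induction j with
  | zero => intro _; simp
  | succ n ih =>
    intro hn
    have hn' : n ≤ p - 1 := by omega
    have hlt : n + 1 < p := by have := hp.two_le; omega
    have hsum : (p-1).choose n + (p-1).choose (n+1) = p.choose (n+1) := by
      rw [show p = (p-1) + 1 from (Nat.succ_pred_eq_of_pos hp.pos).symm]
      rw [Nat.choose_succ_succ]
      simp
    have hdvd : p ∣ p.choose (n+1) := hp.dvd_choose_self (by omega) hlt
    have h0 : ((p.choose (n+1) : ℕ) : ZMod p) = 0 := by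
      exact_mod_cast (ZMod.natCast_eq_zero_iff _ _).2 hdvd
    have hih := ih hn'
    have hcast : ((p-1).choose n : ZMod p) + ((p-1).choose (n+1) : ZMod p) = 0 := by
      rw [← Nat.cast_add, hsum, h0]
    rw [hih] at hcast
    rw [pow_succ]
    linear_combination hcast

/-- z-value for the choose congruence -/
noncomputable def auxz (p k : ℕ) : ℤ := (((p-1).choose (k-1) : ℤ) - (-1)^(k-1)) / p

lemma aux_choose_eq (p : ℕ) (hp : p.Prime) (R : Type*) [CommRing R] [IsLocalRing R]
    [CharP (IsLocalRing.ResidueField R) p] {k : ℕ} (h1 : 1 ≤ k) (h2 : k ≤ p - 1) :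
    ((p.choose k : ℕ) : R) = (p:R) * ((-1:R)^(k-1) * Ring.inverse (k:R))
      + (p:R)^2 * (Ring.inverse (k:R) * ((auxz p k : ℤ) : R)) := by
  haveI := Fact.mk hp
  have hklt : k < p := by have := hp.two_le; omega
  have hknd : ¬ p ∣ k := by
    intro h
    have := Nat.le_of_dvd (by omega) h
    omega
  have hku : IsUnit (k : R) := aux_unit p R hknd
  have hki : (k:R) * Ring.inverse (k:R) = 1 := Ring.mul_inverse_cancel _ hku
  have hdvd : (p:ℤ) ∣ (((p-1).choose (k-1) : ℤ) - (-1)^(k-1)) := by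
    rw [← ZMod.intCast_zmod_eq_zero_iff_dvd]
    push_cast
    rw [aux_choose_mod p hp (k-1) (by omega)]
    ring
  have hz : (((p-1).choose (k-1) : ℤ) - (-1)^(k-1)) = p * auxz p k :=
    (Int.mul_ediv_cancel' hdvd).symm
  have hmul : k * p.choose k = p * (p-1).choose (k-1) := by
    have h := Nat.add_one_mul_choose_eq (p-1) (k-1)
    rw [show p-1+1 = p from Nat.succ_pred_eq_of_pos hp.pos,
        show k-1+1 = k from Nat.succ_pred_eq_of_pos h1] at h
    rw [mul_comm k (p.choose k), ← h]
  apply hku.mul_left_cancel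
  have hcast2 : (k:R) * ((p.choose k : ℕ) : R) = (p:R) * (((p-1).choose (k-1) : ℕ) : R) := by
    exact_mod_cast congrArg (Nat.cast : ℕ → R) hmul
  have hthis : (((p-1).choose (k-1) : ℕ) : R) = (-1:R)^(k-1) + (p:R) * ((auxz p k : ℤ) : R) := by
    have hz' := congrArg (Int.cast : ℤ → R) hz
    push_cast at hz'
    linear_combination hz'
  linear_combination hcast2 + (p:R) * hthis - ((p:R)*(-1:R)^(k-1) + (p:R)^2*((auxz p k : ℤ):R)) * hki

lemma aux_keypoly (p : ℕ) (hp : p.Prime) (R : Type*) [CommRing R] [IsLocalRing R]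
    [CharP (IsLocalRing.ResidueField R) p] (x : R) :
    ∃ ρ : R, x ∣ ρ ∧ (1 + x)^p = 1 + x^p
      + (p:R) * (∑ k ∈ Finset.Icc 1 (p-1), (-1:R)^(k-1) * Ring.inverse (k:R) * x^k)
      + (p:R)^2 * ρ := by
  refine ⟨∑ k ∈ Finset.Icc 1 (p-1), Ring.inverse (k:R) * ((auxz p k : ℤ) : R) * x^k,
    Finset.dvd_sum ?_, ?_⟩
  · intro k hk
    have h1 : 1 ≤ k := (Finset.mem_Icc.1 hk).1
    exact Dvd.dvd.mul_left (dvd_pow_self x (by omega)) _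
  · have hpow : (1+x)^p = ∑ k ∈ Finset.range (p+1), x^k * (1:R)^(p-k) * (p.choose k) := by
      rw [add_comm]; exact add_pow x 1 p
    simp only [one_pow, mul_one] at hpow
    rw [Finset.sum_range_succ, Nat.choose_self, Nat.cast_one, mul_one] at hpow
    rw [Finset.range_eq_Ico, Finset.sum_eq_sum_Ico_succ_bot hp.pos] at hpow
    rw [show Finset.Ico 1 p = Finset.Icc 1 (p-1) by
      rw [← Finset.Ico_add_one_right_eq_Icc, show p-1+1 = p from Nat.succ_pred_eq_of_pos hp.pos]] at hpow
    have hterm : ∀ k ∈ Finset.Icc 1 (p-1), x^k * ((p.choose k : ℕ) : R)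
        = (p:R) * ((-1:R)^(k-1) * Ring.inverse (k:R) * x^k)
          + (p:R)^2 * (Ring.inverse (k:R) * ((auxz p k : ℤ) : R) * x^k) := by
      intro k hk
      obtain ⟨h1, h2⟩ := Finset.mem_Icc.1 hk
      rw [aux_choose_eq p hp R h1 h2]; ring
    rw [Finset.sum_congr rfl hterm, Finset.sum_add_distrib, ← Finset.mul_sum,
      ← Finset.mul_sum] at hpow
    simp only [pow_zero, Nat.choose_zero_right, Nat.cast_one, one_mul] at hpow
    linear_combination hpow

/-- With `p > 2`, `ζ` a primitive `p²`-th root of unity, `λ₂ := ζ - 1`,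
`λ₁ := ζ^p - 1`, `η := Σ_{k=1}^{p-1} (-1)^{k-1}·k⁻¹·λ₂^k`, and `c·λ₁^{p-1} = p`:
`λ₁^p` divides `p·η - λ₁ - c·η^p` in `R`. -/
theorem stmt_12 (p : ℕ) (hp : p.Prime) (hp2 : 2 < p)
    (R : Type*) [CommRing R] [IsDomain R] [IsDiscreteValuationRing R] [CharZero R]
    [CharP (IsLocalRing.ResidueField R) p]
    (ζ : R) (hζ : IsPrimitiveRoot ζ (p ^ 2))
    (η : R)
    (hη : η = ∑ k ∈ Finset.Icc 1 (p - 1),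
        (-1 : R) ^ (k - 1) * Ring.inverse (k : R) * (ζ - 1) ^ k)
    (c : R) (hc : c * (ζ ^ p - 1) ^ (p - 1) = (p : R)) :
    (ζ ^ p - 1) ^ p ∣ (p : R) * η - (ζ ^ p - 1) - c * η ^ p := by
  haveI := Fact.mk hp
  obtain ⟨s, rfl⟩ : ∃ s, p = s + 3 := ⟨p - 3, by omega⟩
  have e1 : s + 3 - 1 = s + 2 := rfl
  simp only [e1] at hη hc
  set L2 : R := ζ - 1 with hL2
  set L1 : R := ζ^(s+3) - 1 with hL1
  have hodd : Odd (s+3) := hp.odd_of_ne_two (by omega)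
  -- Step A : expansion of ζ^p
  obtain ⟨ρ₂, hρ₂, hA⟩ := aux_keypoly (s+3) hp R L2
  simp only [e1] at hA
  rw [show (1:R) + L2 = ζ by rw [hL2]; ring, ← hη] at hA
  have hM1 : L1 = L2^(s+3) + ((s+3:ℕ):R) * η + ((s+3:ℕ):R)^2 * ρ₂ := by
    rw [hL1]; linear_combination hA
  -- the factor w with η = L2 * w
  set w : R := ∑ k ∈ Finset.Icc 1 (s+2), (-1:R)^(k-1) * Ring.inverse (k:R) * L2^(k-1) with hw
  have hηw : η = L2 * w := by
    rw [hη, hw, Finset.mul_sum]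
    refine Finset.sum_congr rfl ?_
    intro k hk
    have h1 : 1 ≤ k := (Finset.mem_Icc.1 hk).1
    rw [show L2^k = L2 * L2^(k-1) by
      conv_lhs => rw [show k = 1 + (k-1) by omega]
      rw [pow_add, pow_one]]
    ring
  rw [hηw] at hM1
  -- Step B : expansion at L1, using ζ^{p^2} = 1
  obtain ⟨ρ₁, hρ₁, hB⟩ := aux_keypoly (s+3) hp R L1
  simp only [e1] at hB
  rw [show (1:R) + L1 = ζ^(s+3) by rw [hL1]; ring] at hB
  have hzeta1 : (ζ^(s+3))^(s+3) = 1 := by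
    rw [← pow_mul, show (s+3)*(s+3) = (s+3)^2 by ring]
    exact hζ.pow_eq_one
  rw [hzeta1] at hB
  set F1 : R := ∑ k ∈ Finset.Icc 1 (s+2), (-1:R)^(k-1) * Ring.inverse (k:R) * L1^(k-1) with hF1
  have hGF : (∑ k ∈ Finset.Icc 1 (s+2), (-1:R)^(k-1) * Ring.inverse (k:R) * L1^k) = L1 * F1 := by
    rw [hF1, Finset.mul_sum]
    refine Finset.sum_congr rfl ?_
    intro k hk
    have h1 : 1 ≤ k := (Finset.mem_Icc.1 hk).1
    rw [show L1^k = L1 * L1^(k-1) by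
      conv_lhs => rw [show k = 1 + (k-1) by omega]
      rw [pow_add, pow_one]]
    ring
  rw [hGF] at hB
  obtain ⟨r₀, hr₀⟩ := hρ₁
  rw [hr₀] at hB
  have hL1ne : L1 ≠ 0 := by
    rw [hL1]
    refine sub_ne_zero.2 (hζ.pow_ne_one_of_pos_of_lt (by omega) (by nlinarith))
  have hkey : 1 + c * F1 + ((s+3:ℕ):R) * c * r₀ = 0 := by
    have hfac : L1^(s+3) * (1 + c*F1 + ((s+3:ℕ):R)*c*r₀) = 0 := by
      linear_combination (-1:R)*hB + (L1*F1 + ((s+3:ℕ):R)*L1*r₀)*hc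
    rcases mul_eq_zero.1 hfac with h | h
    · exact absurd h (pow_ne_zero _ hL1ne)
    · exact h
  -- divisibility chain
  have dL2L1 : L2 ∣ L1 := by
    rw [hL1, hL2]
    simpa using sub_dvd_pow_sub_pow ζ 1 (s+3)
  have dL1p : L1^(s+2) ∣ ((s+3:ℕ):R) := ⟨c, by linear_combination -hc⟩
  obtain ⟨ρ₂', hρ₂'⟩ := hρ₂
  have h1' : L2^(s+2) ∣ ((s+3:ℕ):R) := (pow_dvd_pow_of_dvd dL2L1 _).trans dL1p
  obtain ⟨t0, ht0⟩ := h1'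
  have hL1fact : L1 = L2^(s+3) * (1 + t0 * (w + ((s+3:ℕ):R) * ρ₂')) := by
    rw [hM1, hρ₂']
    linear_combination (L2*w + ((s+3:ℕ):R)*L2*ρ₂') * ht0
  have dL2p : L2^(s+3) ∣ L1 := ⟨_, hL1fact⟩
  have dL2pp : L2^((s+3)*(s+2)) ∣ ((s+3:ℕ):R) := by
    have := (pow_dvd_pow_of_dvd dL2p (s+2)).trans dL1p
    rwa [← pow_mul] at this
  obtain ⟨t1, ht1⟩ := dL2pp
  set h2 : R := L2^(s*s+4*s+3) * (t1 * (w + ((s+3:ℕ):R)*ρ₂')) with hh2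
  have hL1fact2 : L1 = L2^(s+3) * (1 + L2 * h2) := by
    rw [hM1, hρ₂', hh2]
    linear_combination (L2*w + ((s+3:ℕ):R)*L2*ρ₂') * ht1
  -- L2 is a nonunit
  have hL2mem : L2 ∈ IsLocalRing.maximalIdeal R := by
    haveI : ExpChar (IsLocalRing.ResidueField R) (s+3) := ExpChar.prime hp
    have hres : IsLocalRing.residue R L2 = 0 := by
      have h1 : (IsLocalRing.residue R L2)^((s+3)^2) = 0 := by
        rw [hL2, map_sub, map_one, sub_pow_char_pow]
        rw [← map_pow, hζ.pow_eq_one, map_one, one_pow, sub_self]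
      exact pow_eq_zero_iff (by positivity) |>.1 h1
    exact Ideal.Quotient.eq_zero_iff_mem.1 hres
  -- the unit
  have hunit : IsUnit (1 + L2 * h2) := by
    by_contra hn
    have hm1 : 1 + L2*h2 ∈ IsLocalRing.maximalIdeal R := (IsLocalRing.mem_maximalIdeal _).2 hn
    have hm2 : L2*h2 ∈ IsLocalRing.maximalIdeal R := Ideal.mul_mem_right _ _ hL2mem
    have hm3 : (1:R) ∈ IsLocalRing.maximalIdeal R := by
      have := Ideal.sub_mem _ hm1 hm2
      simpa using this
    exact (IsLocalRing.maximalIdeal.isMaximal R).ne_top (Ideal.eq_top_of_isUnit_mem _ hm3 isUnit_one)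
  obtain ⟨uu, huu⟩ := isUnit_iff_exists_inv.1 hunit
  -- Step D : p ∣ 1 + c * w^p  via the quotient ring mod p
  have hpnon : ((s+3:ℕ):R) ∈ nonunits R := by
    rw [← IsLocalRing.mem_maximalIdeal]
    have h0 : IsLocalRing.residue R ((s+3:ℕ) : R) = 0 := by
      rw [map_natCast]; exact CharP.cast_eq_zero _ _
    exact Ideal.Quotient.eq_zero_iff_mem.1 h0
  haveI hchar := CharP.quotient R (s+3) hpnon
  haveI : ExpChar (R ⧸ (Ideal.span ({((s+3:ℕ):R)} : Set R) : Ideal R)) (s+3) := ExpChar.prime hp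
  set q : R →+* R ⧸ (Ideal.span ({((s+3:ℕ):R)} : Set R) : Ideal R) :=
    Ideal.Quotient.mk (Ideal.span ({((s+3:ℕ):R)} : Set R)) with hq
  have hqL : (q L2)^(s+3) = q L1 := by
    rw [← map_pow]
    refine Ideal.Quotient.eq.2 ?_
    rw [Ideal.mem_span_singleton]
    exact ⟨-((L2*w) + ((s+3:ℕ):R)*ρ₂), by linear_combination -hM1⟩
  have hFermat : ∀ k ∈ Finset.Icc 1 (s+2),
      (q (Ring.inverse (k:R)))^(s+3) = q (Ring.inverse (k:R)) := by
    intro k hk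
    obtain ⟨h1, hk2⟩ := Finset.mem_Icc.1 hk
    have hknd : ¬ (s+3) ∣ k := fun h => by have := Nat.le_of_dvd (by omega) h; omega
    have hku := aux_unit (s+3) R hknd
    have hki : (k:R) * Ring.inverse (k:R) = 1 := Ring.mul_inverse_cancel _ hku
    have hkiS : ((k:ℕ) : R ⧸ _) * q (Ring.inverse (k:R)) = 1 := by
      have h := congrArg q hki
      rwa [map_mul, map_one, map_natCast] at h
    have hkp : ((k:ℕ) : R ⧸ (Ideal.span ({((s+3:ℕ):R)} : Set R) : Ideal R))^(s+3) = ((k:ℕ) : _) := by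
      have hidvd : ((s+3:ℕ):ℤ) ∣ ((k:ℤ)^(s+3) - (k:ℤ)) := by
        rw [← ZMod.intCast_zmod_eq_zero_iff_dvd]
        push_cast
        rw [ZMod.pow_card]
        ring
      have h2' := (CharP.intCast_eq_zero_iff
        (R ⧸ (Ideal.span ({((s+3:ℕ):R)} : Set R) : Ideal R)) (s+3) _).2 hidvd
      push_cast at h2'
      linear_combination h2'
    set b := q (Ring.inverse (k:R)) with hb
    have h1' : ((k:ℕ) : R ⧸ _) * b^(s+3) = 1 := by
      have h := congrArg (·^(s+3)) hkiS
      simp only [mul_pow, one_pow] at h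
      rw [hkp] at h
      exact h
    calc b^(s+3) = (((k:ℕ) : R ⧸ _) * b) * b^(s+3) := by rw [hkiS, one_mul]
      _ = (((k:ℕ) : R ⧸ _) * b^(s+3)) * b := by ring
      _ = b := by rw [h1', one_mul]
  have hqw : q (w^(s+3)) = q F1 := by
    rw [map_pow, hw, map_sum, sum_pow_char]
    rw [hF1, map_sum]
    refine Finset.sum_congr rfl ?_
    intro k hk
    simp only [map_mul, map_pow, map_neg, map_one]
    rw [mul_pow, mul_pow, ← pow_mul, ← pow_mul, mul_comm (k-1) (s+3), pow_mul, pow_mul]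
    rw [hodd.neg_one_pow, hFermat k hk, hqL]
  have hDF : ((s+3:ℕ):R) ∣ w^(s+3) - F1 := by
    have h0 : q (w^(s+3) - F1) = 0 := by rw [map_sub, hqw, sub_self]
    exact (Ideal.Quotient.eq_zero_iff_dvd _ _).1 h0
  obtain ⟨d1, hd1⟩ := hDF
  have hD : ((s+3:ℕ):R) ∣ 1 + c * w^(s+3) :=
    ⟨c*d1 - c*r₀, by linear_combination hkey + c*hd1⟩
  -- T1
  have hdpp : L1^(s+3) ∣ L2^((s+3)*(s+3)) := by
    refine ⟨uu^(s+3), ?_⟩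
    have h : L1^(s+3) = L2^((s+3)*(s+3)) * (1 + L2*h2)^(s+3) := by
      rw [hL1fact2, mul_pow, ← pow_mul]
    rw [h, mul_assoc, ← mul_pow, huu, one_pow, mul_one]
  have T1 : L1^(s+3) ∣ L2^(s+3) * (1 + c*w^(s+3)) := by
    refine hdpp.trans ?_
    rw [show (s+3)*(s+3) = (s+3) + (s+3)*(s+2) by ring, pow_add]
    exact mul_dvd_mul_left _ (dvd_trans ⟨t1, ht1⟩ hD)
  -- T2
  have T2 : L1^(s+3) ∣ ((s+3:ℕ):R)^2 * ρ₂ := by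
    have hL1dvd : L1 ∣ ((s+3:ℕ):R) * ρ₂ :=
      dvd_mul_of_dvd_left ((dvd_pow_self L1 (by omega : s+2 ≠ 0)).trans dL1p) _
    have h2' : L1^(s+2) * L1 ∣ ((s+3:ℕ):R) * (((s+3:ℕ):R) * ρ₂) := mul_dvd_mul dL1p hL1dvd
    have e2 : L1^(s+2) * L1 = L1^(s+3) := by ring
    have e3 : ((s+3:ℕ):R) * (((s+3:ℕ):R) * ρ₂) = ((s+3:ℕ):R)^2 * ρ₂ := by ring
    rwa [e2, e3] at h2'
  -- conclusion
  have hηpow : η^(s+3) = L2^(s+3) * w^(s+3) := by rw [hηw, mul_pow]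
  have hgoal : ((s+3:ℕ):R) * η - L1 - c*η^(s+3)
      = -(L2^(s+3) * (1 + c*w^(s+3))) - ((s+3:ℕ):R)^2 * ρ₂ := by
    rw [hηpow, hηw]
    linear_combination -hM1
  rw [hgoal]
  exact dvd_sub (dvd_neg.2 T1) T2
end

section
/- Assume p > 2 and that R contains a primitive p²-th root of unity ζ; set λ_{(1)} := ζ^p − 1. Let μ, λ ∈ R be nonzero with v(λ_{(1)}) ≥ v(μ) ≥ v(λ) and v(μ) < p·v(λ), and let c ∈ R be the element with c·μ^{p−1} = p. If j is an integer not divisible by p and b ∈ R satisfies that λ divides b^p and λ^p divides p·b − j·μ − c·b^p, then b ≠ 0 and p·v(b) = p·v(μ) − v(p). -/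
section Aux

set_option linter.unusedSectionVars false
set_option linter.unusedVariables false
variable {R : Type*} [CommRing R] [IsDomain R] [IsDiscreteValuationRing R] {v : R → ℕ∞} {π : R}

lemma aux15_le (hπ : Irreducible π)
    (hv : ∀ x : R, x ≠ 0 → ∃ n : ℕ, v x = n ∧ π ^ n ∣ x ∧ ¬ π ^ (n + 1) ∣ x)
    {z : R} (hz : z ≠ 0) {m : ℕ} (h : π ^ m ∣ z) : (m : ℕ∞) ≤ v z := by
  obtain ⟨n, hn, h1, h2⟩ := hv z hz
  rw [hn, Nat.cast_le]
  by_contra hlt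
  exact h2 ((pow_dvd_pow π (by omega)).trans h)

lemma aux15_eq (hπ : Irreducible π)
    (hv : ∀ x : R, x ≠ 0 → ∃ n : ℕ, v x = n ∧ π ^ n ∣ x ∧ ¬ π ^ (n + 1) ∣ x)
    {z z' : R} {n : ℕ} (hz' : z' ≠ 0) (hzz : z = π ^ n * z') (hnd : ¬ π ∣ z') :
    v z = n := by
  have hz : z ≠ 0 := by
    rw [hzz]; exact mul_ne_zero (pow_ne_zero _ hπ.ne_zero) hz'
  obtain ⟨m, hm, h1, h2⟩ := hv z hz
  rw [hm, Nat.cast_inj]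
  have hnm : n ≤ m := by
    by_contra hlt
    exact h2 ((pow_dvd_pow π (by omega)).trans ⟨z', hzz⟩)
  have hmn : m ≤ n := by
    by_contra hlt
    apply hnd
    have h3 : π ^ n * π ∣ π ^ n * z' := by
      rw [← pow_succ, ← hzz]
      exact (pow_dvd_pow π (by omega)).trans h1
    exact (mul_dvd_mul_iff_left (pow_ne_zero n hπ.ne_zero)).mp h3
  omega

lemma aux15_exact (hπ : Irreducible π)
    (hv : ∀ x : R, x ≠ 0 → ∃ n : ℕ, v x = n ∧ π ^ n ∣ x ∧ ¬ π ^ (n + 1) ∣ x)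
    {z : R} (hz : z ≠ 0) : ∃ n : ℕ, ∃ z' : R, v z = n ∧ z = π ^ n * z' ∧ ¬ π ∣ z' := by
  obtain ⟨n, hn, ⟨z', hz'⟩, h2⟩ := hv z hz
  refine ⟨n, z', hn, hz', fun ⟨w, hw⟩ => h2 ?_⟩
  exact ⟨w, by rw [hz', hw, pow_succ]; ring⟩

lemma aux15_mul (hπ : Irreducible π)
    (hv : ∀ x : R, x ≠ 0 → ∃ n : ℕ, v x = n ∧ π ^ n ∣ x ∧ ¬ π ^ (n + 1) ∣ x)
    {x y : R} (hx : x ≠ 0) (hy : y ≠ 0) : v (x * y) = v x + v y := by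
  obtain ⟨nx, x', hvx, hxe, hx'⟩ := aux15_exact hπ hv hx
  obtain ⟨ny, y', hvy, hye, hy'⟩ := aux15_exact hπ hv hy
  have hx'0 : x' ≠ 0 := fun h => hx (by rw [hxe, h, mul_zero])
  have hy'0 : y' ≠ 0 := fun h => hy (by rw [hye, h, mul_zero])
  have : v (x * y) = ((nx + ny : ℕ) : ℕ∞) := by
    refine aux15_eq hπ hv (mul_ne_zero hx'0 hy'0) ?_ ?_
    · rw [hxe, hye, pow_add]; ring
    · intro h
      rcases hπ.prime.2.2 _ _ h with h | h
      exacts [hx' h, hy' h]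
  rw [this, hvx, hvy, Nat.cast_add]

lemma aux15_pow (hπ : Irreducible π)
    (hv : ∀ x : R, x ≠ 0 → ∃ n : ℕ, v x = n ∧ π ^ n ∣ x ∧ ¬ π ^ (n + 1) ∣ x)
    {x : R} (hx : x ≠ 0) (k : ℕ) : v (x ^ k) = k * v x := by
  induction k with
  | zero =>
      have h1 : v (1 : R) = ((0 : ℕ) : ℕ∞) :=
        aux15_eq hπ hv one_ne_zero (by rw [pow_zero, one_mul])
          (fun h => hπ.not_isUnit (isUnit_of_dvd_one h))
      simp [pow_zero, h1]
  | succ k ih =>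
      rw [pow_succ, aux15_mul hπ hv (pow_ne_zero _ hx) hx, ih, Nat.cast_succ,
        add_mul, one_mul]

lemma aux15_dvd_le (hπ : Irreducible π)
    (hv : ∀ x : R, x ≠ 0 → ∃ n : ℕ, v x = n ∧ π ^ n ∣ x ∧ ¬ π ^ (n + 1) ∣ x)
    {x y : R} (h : x ∣ y) (hy : y ≠ 0) : v x ≤ v y := by
  obtain ⟨d, rfl⟩ := h
  have hx : x ≠ 0 := fun h => hy (by rw [h, zero_mul])
  have hd : d ≠ 0 := fun h => hy (by rw [h, mul_zero])
  rw [aux15_mul hπ hv hx hd]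
  exact le_add_of_nonneg_right zero_le

lemma aux15_min (hπ : Irreducible π) (hv0 : v 0 = ⊤)
    (hv : ∀ x : R, x ≠ 0 → ∃ n : ℕ, v x = n ∧ π ^ n ∣ x ∧ ¬ π ^ (n + 1) ∣ x)
    (x y : R) : min (v x) (v y) ≤ v (x + y) := by
  rcases eq_or_ne x 0 with rfl | hx
  · simp [min_le_right]
  rcases eq_or_ne y 0 with rfl | hy
  · simp [min_le_left]
  rcases eq_or_ne (x + y) 0 with hxy | hxy
  · rw [hxy, hv0]; exact le_top
  obtain ⟨nx, hnx, hdx, -⟩ := hv x hx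
  obtain ⟨ny, hny, hdy, -⟩ := hv y hy
  have hd : π ^ (min nx ny) ∣ x + y :=
    dvd_add ((pow_dvd_pow π (min_le_left _ _)).trans hdx)
      ((pow_dvd_pow π (min_le_right _ _)).trans hdy)
  have hcast : ((min nx ny : ℕ) : ℕ∞) = min (v x) (v y) := by
    rw [hnx, hny]
    rcases le_total nx ny with h | h
    · rw [min_eq_left h, min_eq_left (Nat.cast_le.mpr h)]
    · rw [min_eq_right h, min_eq_right (Nat.cast_le.mpr h)]
  rw [← hcast]
  exact aux15_le hπ hv hxy hd

lemma aux15_neg (hπ : Irreducible π) (hv0 : v 0 = ⊤)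
    (hv : ∀ x : R, x ≠ 0 → ∃ n : ℕ, v x = n ∧ π ^ n ∣ x ∧ ¬ π ^ (n + 1) ∣ x)
    (x : R) : v (-x) = v x := by
  rcases eq_or_ne x 0 with rfl | hx
  · rw [neg_zero]
  obtain ⟨n, x', hn, hxe, hx'⟩ := aux15_exact hπ hv hx
  rw [hn]
  exact aux15_eq hπ hv (neg_ne_zero.mpr (fun h => hx (by rw [hxe, h, mul_zero])))
    (by rw [hxe]; ring) (fun h => hx' ((dvd_neg).mp h))

end Aux

section Aux2
variable {R : Type*} [CommRing R] [IsDomain R] [IsDiscreteValuationRing R] {v : R → ℕ∞} {π : R}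

lemma aux15_min3 (hπ : Irreducible π) (hv0 : v 0 = ⊤)
    (hv : ∀ x : R, x ≠ 0 → ∃ n : ℕ, v x = n ∧ π ^ n ∣ x ∧ ¬ π ^ (n + 1) ∣ x)
    (x y z w : R) (hw : w = x + y + z) :
    min (min (v x) (v y)) (v z) ≤ v w := by
  calc min (min (v x) (v y)) (v z) ≤ min (v (x + y)) (v z) :=
        min_le_min (aux15_min hπ hv0 hv x y) le_rfl
    _ ≤ v (x + y + z) := aux15_min hπ hv0 hv _ _
    _ = v w := by rw [hw]

end Aux2

/-- With `p > 2`, `ζ` a primitive `p²`-th root of unity, `λ₁ := ζ^p - 1`,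
`μ, λ` nonzero with `v(λ₁) ≥ v(μ) ≥ v(λ)` and `v(μ) < p·v(λ)`, and `c·μ^{p-1} = p`:
if `j` is an integer not divisible by `p` and `b ∈ R` satisfies `λ ∣ b^p` and
`λ^p ∣ p·b - j·μ - c·b^p`, then `b ≠ 0` and `p·v(b) = p·v(μ) - v(p)`
(stated as `p·v(b) + v(p) = p·v(μ)`). -/
theorem stmt_15 (p : ℕ) (hp : p.Prime) (hp2 : 2 < p)
    (R : Type*) [CommRing R] [IsDomain R] [IsDiscreteValuationRing R] [CharZero R]
    [CharP (IsLocalRing.ResidueField R) p]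
    (v : R → ℕ∞) (π : R) (hπ : Irreducible π) (hv0 : v 0 = ⊤)
    (hv : ∀ x : R, x ≠ 0 → ∃ n : ℕ, v x = n ∧ π ^ n ∣ x ∧ ¬ π ^ (n + 1) ∣ x)
    (ζ : R) (hζ : IsPrimitiveRoot ζ (p ^ 2))
    (μ lam : R) (hμ0 : μ ≠ 0) (hlam0 : lam ≠ 0)
    (h1 : v μ ≤ v (ζ ^ p - 1)) (h2 : v lam ≤ v μ) (h3 : v μ < (p : ℕ∞) * v lam)
    (c : R) (hc : c * μ ^ (p - 1) = (p : R))
    (j : ℤ) (hj : ¬ (p : ℤ) ∣ j) (b : R)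
    (hb1 : lam ∣ b ^ p) (hb2 : lam ^ p ∣ ((p : R) * b - (j : R) * μ - c * b ^ p)) :
    b ≠ 0 ∧ (p : ℕ∞) * v b + v (p : R) = (p : ℕ∞) * v μ := by
  haveI : Fact p.Prime := ⟨hp⟩
  haveI : NeZero p := ⟨hp.pos.ne'⟩
  have hppos : 0 < p := hp.pos
  have hpR : (p : R) ≠ 0 := Nat.cast_ne_zero.mpr hppos.ne'
  have hη : IsPrimitiveRoot (ζ ^ p) p := hζ.pow (by positivity) (pow_two p)
  have hl10 : ζ ^ p - 1 ≠ 0 := sub_ne_zero.mpr (hη.ne_one hp.one_lt)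
  -- π divides p
  have hmax := (IsDiscreteValuationRing.irreducible_iff_uniformizer π).mp hπ
  have hπp : π ∣ (p : R) := by
    have hmem : (p : R) ∈ IsLocalRing.maximalIdeal R := by
      rw [← IsLocalRing.residue_eq_zero_iff, map_natCast]
      exact CharP.cast_eq_zero _ p
    rwa [hmax, Ideal.mem_span_singleton] at hmem
  -- π does not divide j
  have hjR : ¬ π ∣ ((j : ℤ) : R) := by
    intro hd
    have hmem : ((j : ℤ) : R) ∈ IsLocalRing.maximalIdeal R := by
      rw [hmax, Ideal.mem_span_singleton]; exact hd
    rw [← IsLocalRing.residue_eq_zero_iff, map_intCast] at hmem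
    exact hj ((CharP.intCast_eq_zero_iff _ p j).mp hmem)
  have hjR0 : ((j : ℤ) : R) ≠ 0 := Int.cast_ne_zero.mpr (fun h => hj (h ▸ dvd_zero _))
  -- (1 - ζ^p)^(p-1) divides p
  have hprod : ((p : ℕ) : R) = ∏ x ∈ primitiveRoots p R, (1 - x) := by
    have h := Polynomial.eval_one_cyclotomic_prime (R := R) (p := p)
    rw [Polynomial.cyclotomic_eq_prod_X_sub_primitiveRoots hη] at h
    simpa [Polynomial.eval_prod] using h.symm
  have hcard : (primitiveRoots p R).card = p - 1 := by
    rw [hη.card_primitiveRoots, Nat.totient_prime hp]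
  have hdvd : (1 - ζ ^ p) ^ (p - 1) ∣ ((p : ℕ) : R) := by
    rw [hprod, ← hcard, ← Finset.prod_const]
    apply Finset.prod_dvd_prod_of_dvd
    intro x hx
    have hxp : x ^ p = 1 := (isPrimitiveRoot_of_mem_primitiveRoots hx).pow_eq_one
    obtain ⟨i, hi, rfl⟩ := hη.eq_pow_of_pow_eq_one hxp
    simpa using sub_dvd_pow_sub_pow (1 : R) (ζ ^ p) i
  -- extract natural number valuations
  obtain ⟨t, ht, -, -⟩ := hv _ hl10
  obtain ⟨e, he, -, -⟩ := hv μ hμ0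
  obtain ⟨f, hf, -, -⟩ := hv lam hlam0
  obtain ⟨vp, hvp, -, -⟩ := hv _ hpR
  have het : e ≤ t := by rw [he, ht, Nat.cast_le] at h1; exact h1
  have hef : f ≤ e := by rw [he, hf, Nat.cast_le] at h2; exact h2
  have hepf : e < p * f := by
    rw [he, hf] at h3
    exact_mod_cast h3
  -- vp ≥ (p-1) * t
  have h1z : (1 - ζ ^ p) ≠ 0 := fun h => hl10 (by linear_combination -h)
  have hv1z : v (1 - ζ ^ p) = (t : ℕ∞) := by
    rw [show (1 - ζ ^ p) = -(ζ ^ p - 1) by ring, aux15_neg hπ hv0 hv, ht]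
  have hvple : (p - 1) * t ≤ vp := by
    have h := aux15_dvd_le hπ hv hdvd hpR
    rw [aux15_pow hπ hv h1z, hv1z, hvp] at h
    exact_mod_cast h
  have hvp1 : 1 ≤ vp := by
    have h := aux15_le hπ hv hpR (m := 1) (by rw [pow_one]; exact hπp)
    rw [hvp] at h
    exact_mod_cast h
  -- vp > e
  have hvpe : e < vp := by
    have h2t : 2 * t ≤ (p - 1) * t := Nat.mul_le_mul_right t (by omega)
    have : 2 * e ≤ 2 * t := by omega
    omega
  -- c facts
  have hc0 : c ≠ 0 := fun h => hpR (by rw [← hc, h, zero_mul])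
  obtain ⟨vc, hvc, -, -⟩ := hv c hc0
  have hvceq : vc + (p - 1) * e = vp := by
    have h := congrArg v hc
    rw [aux15_mul hπ hv hc0 (pow_ne_zero _ hμ0), aux15_pow hπ hv hμ0, hvc, he, hvp] at h
    exact_mod_cast h
  have hvj : v ((j : ℤ) : R) = ((0 : ℕ) : ℕ∞) :=
    aux15_eq hπ hv hjR0 (by rw [pow_zero, one_mul]) hjR
  -- b ≠ 0
  have hb0 : b ≠ 0 := by
    rintro rfl
    have hdd : lam ^ p ∣ (j : R) * μ := by
      have h : lam ^ p ∣ -((j : R) * μ) := by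
        have h0 : (p : R) * 0 - (j : R) * μ - c * 0 ^ p = -((j : R) * μ) := by
          rw [zero_pow hppos.ne']; ring
        rw [← h0]; exact hb2
      exact dvd_neg.mp h
    have hle := aux15_dvd_le hπ hv hdd (mul_ne_zero hjR0 hμ0)
    rw [aux15_pow hπ hv hlam0, aux15_mul hπ hv hjR0 hμ0, hvj, hf, he] at hle
    have : p * f ≤ 0 + e := by exact_mod_cast hle
    omega
  obtain ⟨β, hβ, -, -⟩ := hv b hb0
  -- valuations of the three terms
  have hvA : v ((p : R) * b) = ((vp + β : ℕ) : ℕ∞) := by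
    rw [aux15_mul hπ hv hpR hb0, hvp, hβ, Nat.cast_add]
  have hvB : v ((j : R) * μ) = (e : ℕ∞) := by
    rw [aux15_mul hπ hv hjR0 hμ0, hvj, he, Nat.cast_zero, zero_add]
  have hvC : v (c * b ^ p) = ((vc + p * β : ℕ) : ℕ∞) := by
    rw [aux15_mul hπ hv hc0 (pow_ne_zero _ hb0), aux15_pow hπ hv hb0, hvc, hβ]
    push_cast
    ring
  set D : R := (p : R) * b - (j : R) * μ - c * b ^ p with hD
  have hvD : ((p * f : ℕ) : ℕ∞) ≤ v D := by
    rcases eq_or_ne D 0 with h | h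
    · rw [h, hv0]; exact le_top
    · have hle := aux15_dvd_le hπ hv hb2 h
      rw [aux15_pow hπ hv hlam0, hf] at hle
      refine le_trans (le_of_eq ?_) hle
      push_cast
      ring
  -- key inequality 1 : e ≤ vc + p * β
  have key1 : e ≤ vc + p * β := by
    have hmin := aux15_min3 hπ hv0 hv ((p : R) * b) (-((j : R) * μ)) (-D) (c * b ^ p)
      (by rw [hD]; ring)
    rw [hvC] at hmin
    have hA : (e : ℕ∞) ≤ v ((p : R) * b) := by
      rw [hvA]; exact_mod_cast (by omega : e ≤ vp + β)
    have hB : (e : ℕ∞) ≤ v (-((j : R) * μ)) := by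
      rw [aux15_neg hπ hv0 hv, hvB]
    have hDe : (e : ℕ∞) ≤ v (-D) := by
      rw [aux15_neg hπ hv0 hv]
      exact le_trans (by exact_mod_cast (by omega : e ≤ p * f)) hvD
    have := le_trans (le_min (le_min hA hB) hDe) hmin
    exact_mod_cast this
  -- key inequality 2 : vc + p * β ≤ e
  have key2 : vc + p * β ≤ e := by
    by_contra hcon
    have hcon' : e + 1 ≤ vc + p * β := by omega
    have hmin := aux15_min3 hπ hv0 hv ((p : R) * b) (-D) (-(c * b ^ p)) ((j : R) * μ)
      (by rw [hD]; ring)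
    rw [hvB] at hmin
    have hA : ((e + 1 : ℕ) : ℕ∞) ≤ v ((p : R) * b) := by
      rw [hvA]; exact_mod_cast (by omega : e + 1 ≤ vp + β)
    have hDe : ((e + 1 : ℕ) : ℕ∞) ≤ v (-D) := by
      rw [aux15_neg hπ hv0 hv]
      exact le_trans (by exact_mod_cast (by omega : e + 1 ≤ p * f)) hvD
    have hC : ((e + 1 : ℕ) : ℕ∞) ≤ v (-(c * b ^ p)) := by
      rw [aux15_neg hπ hv0 hv, hvC]
      exact_mod_cast hcon'
    have hfin := le_trans (le_min (le_min hA hDe) hC) hmin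
    have : e + 1 ≤ e := by exact_mod_cast hfin
    omega
  have key : vc + p * β = e := le_antisymm key2 key1
  -- conclude
  refine ⟨hb0, ?_⟩
  have hfinal : p * β + vp = p * e := by
    have h5 : e + (p - 1) * e = p * e := by
      have hpp : p - 1 + 1 = p := Nat.succ_pred_eq_of_pos hppos
      calc e + (p - 1) * e = (p - 1 + 1) * e := by ring
        _ = p * e := by rw [hpp]
    calc p * β + vp = p * β + (vc + (p - 1) * e) := by rw [hvceq]
      _ = (vc + p * β) + (p - 1) * e := by ring
      _ = e + (p - 1) * e := by rw [key]
      _ = p * e := h5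
  rw [hβ, hvp, he]
  exact_mod_cast hfinal
end
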